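/- arXiv:math/0406129 — 5 statements merged into one kernel-verified Lean document; each statement's English description precedes it below -/
import Mathlib

section
/- Let k be a nonzero rational number, and for n ≥ 1 set s_n = hⁿ·D + n·k·e·g·h^{n−1} ∈ Λ_B. Then the graded ℚ-algebra H(Λ_B, d₀) is isomorphic to Λ(f,v) ⊗ (ℚ ⊕ M′), where Λ(f,v) is the exterior algebra on two generators of degree 3, M′ is the graded ℚ-vector space with basis consisting of one element in degree 2 (the class of D), one element in degree 4n+3 for each n ≥ 0 (the class of g·hⁿ), and one element in degree 4n+2 for each n ≥ 1 (the class of s_n), and ℚ ⊕ M′ is the square-zero extension of ℚ by M′ (the product of any two elements of M′ is zero). In particular in H(Λ_B,d₀) the relations [D]² = 0 and [D][g] = 0 hold, and the classes of D, f, g, v, g·hⁿ (n ≥ 0) and s_n (n ≥ 1) generate H(Λ_B,d₀) as a ℚ-algebra. (This is the paper's presentation H^*(Emb_ω(c,μ); ℚ) = Λ(D, f, g, v, g·hⁿ, s_n)/⟨D², D·g⟩.) -/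
/-!
Statement 5: the cohomology algebra `H(Λ_B, d₀)` is isomorphic, as a graded ℚ-algebra, to
`Λ(f,v) ⊗ (ℚ ⊕ M′)`, where `Λ(f,v)` is the exterior algebra on two degree-3 generators and
`M′` has basis the class of `D` (degree 2), the classes of `g·hⁿ` (degree 4n+3, n ≥ 0) and
the classes of `s_n = hⁿ·D + n·k·e·g·h^{n−1}` (degree 4n+2, n ≥ 1), with `ℚ ⊕ M′` the
square-zero extension.  This is encoded as: the elements `f^ε·v^δ·m` (ε, δ ∈ {0,1},
`m ∈ {1} ∪ {basis of M′}`) are homogeneous cocycles whose classes form a basis of the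
cohomology, the products of any two of `D, g·hⁿ, s_n` are coboundaries, and `D²`, `D·g`
are coboundaries (the relations `[D]² = 0`, `[D][g] = 0`).
-/

/-- The monomial `∏ᵢ ev i ^ p i · ∏ᵢ od i ^ ε i` (odd generators taken in canonical order). -/
def gcMon {A : Type*} [Ring A] {nE nO : ℕ} (ev : Fin nE → A) (od : Fin nO → A) :
    ((Fin nE → ℕ) × (Fin nO → Bool)) → A :=
  fun m => (List.ofFn fun i => ev i ^ m.1 i).prod *
    (List.ofFn fun i => if m.2 i then od i else 1).prod

/-- The degree of a monomial, given the degrees of the generators. -/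
def gcDeg {nE nO : ℕ} (dE : Fin nE → ℕ) (dO : Fin nO → ℕ) :
    ((Fin nE → ℕ) × (Fin nO → Bool)) → ℕ :=
  fun m => (∑ i, dE i * m.1 i) + ∑ i, (if m.2 i then dO i else 0)

/-- The degree-`m` homogeneous component: the span of the monomials of degree `m`. -/
def gcGrade {A : Type*} [Ring A] [Algebra ℚ A] {nE nO : ℕ}
    (ev : Fin nE → A) (od : Fin nO → A) (dE : Fin nE → ℕ) (dO : Fin nO → ℕ) (m : ℕ) :
    Submodule ℚ A :=
  Submodule.span ℚ (gcMon ev od '' {x | gcDeg dE dO x = m})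

/-- `A` is the free graded-commutative ℚ-algebra on even generators `ev` (central) and
odd generators `od` (pairwise anticommuting, squaring to zero): the monomials form a basis. -/
structure IsFreeGCA {A : Type*} [Ring A] [Algebra ℚ A] {nE nO : ℕ}
    (ev : Fin nE → A) (od : Fin nO → A) : Prop where
  li : LinearIndependent ℚ (gcMon ev od)
  spanning : Submodule.span ℚ (Set.range (gcMon ev od)) = ⊤
  central : ∀ i x, Commute (ev i) x
  anticomm : ∀ i j, od i * od j = -(od j * od i)

/-- The grading of `Λ_B`: `D` has degree 2, `e, f, g, v` degree 3 and `h` degree 4. -/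
def gradeLB {A : Type*} [Ring A] [Algebra ℚ A] (D e f g v h : A) : ℕ → Submodule ℚ A :=
  gcGrade ![D, h] ![e, f, g, v] ![2, 4] ![3, 3, 3, 3]

/-- Index of the basis of `M′`: the class of `D`; the classes of `g·hⁿ` (n ≥ 0); and the
classes of `s_{m+1}` (m ≥ 0). -/
abbrev idxM' : Type := Unit ⊕ ℕ ⊕ ℕ

/-- Representatives of the basis of `M′`: `D`, `g·hⁿ`, and
`s_{m+1} = h^{m+1}·D + (m+1)·k·e·g·hᵐ`. -/
def mEltB {A : Type*} [Ring A] [Algebra ℚ A] (D e g h : A) (k : ℚ) : idxM' → A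
  | Sum.inl _ => D
  | Sum.inr (Sum.inl n) => g * h ^ n
  | Sum.inr (Sum.inr m) => h ^ (m + 1) * D + (((m : ℚ) + 1) * k) • (e * (g * h ^ m))

/-- Degrees of the basis elements of `M′`. -/
def degMB : idxM' → ℕ
  | Sum.inl _ => 2
  | Sum.inr (Sum.inl n) => 4 * n + 3
  | Sum.inr (Sum.inr m) => 4 * (m + 1) + 2

/-- Representatives of the basis of `Λ(f,v) ⊗ (ℚ ⊕ M′)`: the elements `f^ε·v^δ·m` with
`ε, δ ∈ {0,1}` and `m` either `1` or a basis element of `M′`. -/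
def cEltB {A : Type*} [Ring A] [Algebra ℚ A] (D e f g v h : A) (k : ℚ) :
    (Bool × Bool) × Option idxM' → A :=
  fun p => (if p.1.1 then f else 1) * (if p.1.2 then v else 1) *
    (Option.elim p.2 1 (mEltB D e g h k))

/-- Degrees of the basis of `Λ(f,v) ⊗ (ℚ ⊕ M′)`. -/
def degCB : (Bool × Bool) × Option idxM' → ℕ :=
  fun p => (if p.1.1 then 3 else 0) + (if p.1.2 then 3 else 0) + Option.elim p.2 0 degMB


set_option maxHeartbeats 1000000
set_option linter.unusedSectionVars false

namespace St5
variable {A : Type*} [Ring A] [Algebra ℚ A]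

def S : Bool → ℚ := fun b => if b then -1 else 1

lemma S_ne (b : Bool) : S b ≠ 0 := by cases b <;> simp [S]

abbrev I2 : Type := (Fin 2 → ℕ) × (Fin 4 → Bool)

def toI (a b : ℕ) (i j p q : Bool) : I2 := (![a,b], ![i,j,p,q])

def mon (D e f g v h : A) (a b : ℕ) (i j p q : Bool) : A :=
  D^a * (h^b * ((if i then e else 1) * ((if j then f else 1) *
    ((if p then g else 1) * (if q then v else 1)))))

lemma gcMon_toI (D e f g v h : A) (a b : ℕ) (i j p q : Bool) :
    gcMon ![D,h] ![e,f,g,v] (toI a b i j p q) = mon D e f g v h a b i j p q := by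
  cases i <;> cases j <;> cases p <;> cases q <;> simp [gcMon, mon, toI, List.ofFn_succ, mul_assoc]

lemma etaI (t : I2) : t = toI (t.1 0) (t.1 1) (t.2 0) (t.2 1) (t.2 2) (t.2 3) := by
  obtain ⟨n, β⟩ := t
  simp only [toI, Prod.mk.injEq]
  constructor <;> (funext x; fin_cases x <;> simp)

lemma gcMon_eq (D e f g v h : A) (t : I2) :
    gcMon ![D,h] ![e,f,g,v] t = mon D e f g v h (t.1 0) (t.1 1) (t.2 0) (t.2 1) (t.2 2) (t.2 3) := by
  conv_lhs => rw [etaI t]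
  exact gcMon_toI ..

lemma toI_inj {a b a' b' : ℕ} {i j p q i' j' p' q' : Bool}
    (hh : toI a b i j p q = toI a' b' i' j' p' q') :
    a = a' ∧ b = b' ∧ i = i' ∧ j = j' ∧ p = p' ∧ q = q' := by
  obtain ⟨h1, h2⟩ := Prod.mk.injEq .. ▸ hh
  exact ⟨congrFun h1 0, congrFun h1 1, congrFun h2 0, congrFun h2 1, congrFun h2 2, congrFun h2 3⟩

structure Ctx (D e f g v h : A) (k : ℚ) (d : A →ₗ[ℚ] A) : Prop where
  free : IsFreeGCA ![D, h] ![e, f, g, v]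
  leib : ∀ (m : ℕ) (x y : A), x ∈ gradeLB D e f g v h m →
    d (x * y) = d x * y + ((-1 : ℚ) ^ m) • (x * d y)
  dD : d D = 0
  df : d f = 0
  dg : d g = 0
  dv : d v = 0
  de : d e = D * D
  dh : d h = (-k) • (D * g)

variable {D e f g v h : A} {k : ℚ} {d : A →ₗ[ℚ] A}

section Ctx
variable (hc : Ctx D e f g v h k d)
include hc

-- centrality
lemma Ctx.cenD (x y : A) : x * (D * y) = D * (x * y) := by
  have hcm := hc.free.central 0 x
  simp only [Matrix.cons_val_zero] at hcm
  rw [← mul_assoc, ← hcm.eq, mul_assoc]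

lemma Ctx.cenh (x y : A) : x * (h * y) = h * (x * y) := by
  have hcm := hc.free.central 1 x
  simp only [Matrix.cons_val_one, Matrix.head_cons, Matrix.cons_val_zero] at hcm
  rw [← mul_assoc, ← hcm.eq, mul_assoc]

lemma Ctx.cenhp (c : ℕ) (x y : A) : x * (h^c * y) = h^c * (x * y) := by
  have hcm := (hc.free.central 1 x).pow_left c
  simp only [Matrix.cons_val_one, Matrix.head_cons, Matrix.cons_val_zero] at hcm
  rw [← mul_assoc, ← hcm.eq, mul_assoc]

lemma Ctx.cenDp (c : ℕ) (x y : A) : x * (D^c * y) = D^c * (x * y) := by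
  have hcm := (hc.free.central 0 x).pow_left c
  simp only [Matrix.cons_val_zero] at hcm
  rw [← mul_assoc, ← hcm.eq, mul_assoc]

-- odd generators
lemma Ctx.anti (i j : Fin 4) (z : A) :
    (![e,f,g,v] i) * ((![e,f,g,v] j) * z) = -((![e,f,g,v] j) * ((![e,f,g,v] i) * z)) := by
  rw [← mul_assoc, hc.free.anticomm i j, neg_mul, mul_assoc]

lemma Ctx.sq0 (i : Fin 4) (z : A) : (![e,f,g,v] i) * ((![e,f,g,v] i) * z) = 0 := by
  have h1 := hc.free.anticomm i i
  have h2 : (![e,f,g,v] i) * (![e,f,g,v] i) = 0 := by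
    have : (2:ℚ) • ((![e,f,g,v] i) * (![e,f,g,v] i)) = 0 := by
      rw [two_smul]; nth_rewrite 2 [h1]; abel
    calc (![e,f,g,v] i) * (![e,f,g,v] i)
        = (2:ℚ)⁻¹ • ((2:ℚ) • ((![e,f,g,v] i) * (![e,f,g,v] i))) := by
          rw [smul_smul]; norm_num
      _ = 0 := by rw [this, smul_zero]
  rw [← mul_assoc, h2, zero_mul]

end Ctx
variable {A : Type*} [Ring A] [Algebra ℚ A]
variable {D e f g v h : A} {k : ℚ} {d : A →ₗ[ℚ] A}
section Ctx2
variable (hc : Ctx D e f g v h k d)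
include hc

lemma Ctx.swap_ge (z : A) : g * (e * z) = -(e * (g * z)) := by simpa using hc.anti 2 0 z
lemma Ctx.swap_gf (z : A) : g * (f * z) = -(f * (g * z)) := by simpa using hc.anti 2 1 z
lemma Ctx.swap_ve (z : A) : v * (e * z) = -(e * (v * z)) := by simpa using hc.anti 3 0 z
lemma Ctx.swap_vf (z : A) : v * (f * z) = -(f * (v * z)) := by simpa using hc.anti 3 1 z
lemma Ctx.swap_vg (z : A) : v * (g * z) = -(g * (v * z)) := by simpa using hc.anti 3 2 z
lemma Ctx.swap_fe (z : A) : f * (e * z) = -(e * (f * z)) := by simpa using hc.anti 1 0 z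
lemma Ctx.gg (z : A) : g * (g * z) = 0 := by simpa using hc.sq0 2 z
lemma Ctx.ee (z : A) : e * (e * z) = 0 := by simpa using hc.sq0 0 z
lemma Ctx.ff (z : A) : f * (f * z) = 0 := by simpa using hc.sq0 1 z
lemma Ctx.vv (z : A) : v * (v * z) = 0 := by simpa using hc.sq0 3 z
lemma Ctx.swap_ge' : g * e = -(e * g) := by simpa using hc.free.anticomm 2 0
lemma Ctx.swap_gf' : g * f = -(f * g) := by simpa using hc.free.anticomm 2 1
lemma Ctx.swap_ve' : v * e = -(e * v) := by simpa using hc.free.anticomm 3 0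
lemma Ctx.swap_vf' : v * f = -(f * v) := by simpa using hc.free.anticomm 3 1
lemma Ctx.swap_vg' : v * g = -(g * v) := by simpa using hc.free.anticomm 3 2
lemma Ctx.swap_fe' : f * e = -(e * f) := by simpa using hc.free.anticomm 1 0
lemma Ctx.gg' : g * g = (0:A) := by have := hc.gg (1:A); simpa using this
lemma Ctx.ee' : e * e = (0:A) := by have := hc.ee (1:A); simpa using this
lemma Ctx.ff' : f * f = (0:A) := by have := hc.ff (1:A); simpa using this
lemma Ctx.vv' : v * v = (0:A) := by have := hc.vv (1:A); simpa using this

end Ctx2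

lemma gcDeg_toI (a b : ℕ) (i j p q : Bool) :
    gcDeg ![2,4] ![3,3,3,3] (toI a b i j p q) =
      2*a + 4*b + (if i then 3 else 0) + (if j then 3 else 0) +
        (if p then 3 else 0) + (if q then 3 else 0) := by
  cases i <;> cases j <;> cases p <;> cases q <;>
    simp [gcDeg, toI, Fin.sum_univ_succ] <;> ring

lemma mon_mem {D e f g v h : A} {a b : ℕ} {i j p q : Bool} {m : ℕ}
    (hdeg : 2*a + 4*b + (if i then 3 else 0) + (if j then 3 else 0) +
      (if p then 3 else 0) + (if q then 3 else 0) = m) :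
    mon D e f g v h a b i j p q ∈ gradeLB D e f g v h m :=
  Submodule.subset_span ⟨toI a b i j p q, by rw [Set.mem_setOf_eq, gcDeg_toI]; exact hdeg,
    gcMon_toI ..⟩

section Ctx3
variable (hc : Ctx D e f g v h k d)
include hc

lemma Ctx.memD : D ∈ gradeLB D e f g v h 2 := by
  have h0 : mon D e f g v h 1 0 false false false false ∈ gradeLB D e f g v h 2 :=
    mon_mem (by norm_num)
  simpa [mon] using h0
lemma Ctx.memh : h ∈ gradeLB D e f g v h 4 := by
  have h0 : mon D e f g v h 0 1 false false false false ∈ gradeLB D e f g v h 4 :=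
    mon_mem (by norm_num)
  simpa [mon] using h0
lemma Ctx.meme : e ∈ gradeLB D e f g v h 3 := by
  have h0 : mon D e f g v h 0 0 true false false false ∈ gradeLB D e f g v h 3 :=
    mon_mem (by norm_num)
  simpa [mon] using h0
lemma Ctx.memf : f ∈ gradeLB D e f g v h 3 := by
  have h0 : mon D e f g v h 0 0 false true false false ∈ gradeLB D e f g v h 3 :=
    mon_mem (by norm_num)
  simpa [mon] using h0
lemma Ctx.memg : g ∈ gradeLB D e f g v h 3 := by
  have h0 : mon D e f g v h 0 0 false false true false ∈ gradeLB D e f g v h 3 :=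
    mon_mem (by norm_num)
  simpa [mon] using h0
lemma Ctx.memv : v ∈ gradeLB D e f g v h 3 := by
  have h0 : mon D e f g v h 0 0 false false false true ∈ gradeLB D e f g v h 3 :=
    mon_mem (by norm_num)
  simpa [mon] using h0
lemma Ctx.mem1 : (1:A) ∈ gradeLB D e f g v h 0 := by
  have h0 : mon D e f g v h 0 0 false false false false ∈ gradeLB D e f g v h 0 :=
    mon_mem (by norm_num)
  simpa [mon] using h0

lemma Ctx.d1 : d (1:A) = 0 := by
  have h0 := hc.leib 0 1 1 hc.mem1
  simp only [one_mul, mul_one, pow_zero, one_smul] at h0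
  have h1 : d (1:A) + 0 = d 1 + d 1 := by rw [add_zero]; exact h0
  exact (add_left_cancel h1).symm

lemma Ctx.dDmul (y : A) : d (D * y) = D * d y := by
  have h0 := hc.leib 2 D y hc.memD
  simpa [hc.dD, show ((-1:ℚ))^2 = 1 by norm_num] using h0

lemma Ctx.dDpow (a : ℕ) (y : A) : d (D^a * y) = D^a * d y := by
  induction a generalizing y with
  | zero => simp
  | succ a ih =>
    rw [pow_succ, mul_assoc, ih (D * y), hc.dDmul, ← mul_assoc, ← pow_succ]

lemma Ctx.dhmul (y : A) : d (h * y) = -(k • (D * (g * y))) + h * d y := by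
  have h0 := hc.leib 4 h y hc.memh
  simpa [hc.dh, smul_mul_assoc, mul_assoc, show ((-1:ℚ))^4 = 1 by norm_num] using h0

lemma Ctx.dfmul (y : A) : d (f * y) = -(f * d y) := by
  have h0 := hc.leib 3 f y hc.memf
  simpa [hc.df, show ((-1:ℚ))^3 = -1 by norm_num] using h0

lemma Ctx.dgmul (y : A) : d (g * y) = -(g * d y) := by
  have h0 := hc.leib 3 g y hc.memg
  simpa [hc.dg, show ((-1:ℚ))^3 = -1 by norm_num] using h0

lemma Ctx.dvmul (y : A) : d (v * y) = -(v * d y) := by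
  have h0 := hc.leib 3 v y hc.memv
  simpa [hc.dv, show ((-1:ℚ))^3 = -1 by norm_num] using h0

lemma Ctx.demul (y : A) : d (e * y) = D * (D * y) + -(e * d y) := by
  have h0 := hc.leib 3 e y hc.meme
  simpa [hc.de, mul_assoc, show ((-1:ℚ))^3 = -1 by norm_num] using h0

lemma Ctx.dhpow (b : ℕ) (y : A) :
    d (h^b * y) = (-(b:ℚ)*k) • (D * (g * (h^(b-1) * y))) + h^b * d y := by
  induction b generalizing y with
  | zero => simp
  | succ b ih =>
    have hsy : h^(b+1) * y = h * (h^b * y) := by rw [pow_succ', mul_assoc]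
    rw [hsy, hc.dhmul, ih, mul_add, mul_smul_comm,
      show h * (h^b * d y) = h^(b+1) * d y by rw [pow_succ', mul_assoc], ← add_assoc]
    congr 1
    cases b with
    | zero => simp
    | succ c =>
      have hmv : h * (D * (g * (h^c * y))) = D * (g * (h^(c+1) * y)) := by
        rw [hc.cenD h, ← hc.cenh g (h ^ c * y),
          show h * (h^c * y) = h^(c+1) * y by rw [pow_succ', mul_assoc]]
      rw [show (c+1:ℕ) - 1 = c from rfl, show (c+1+1:ℕ) - 1 = c+1 from rfl, hmv,
        show -(k • (D * (g * (h ^ (c + 1) * y)))) = (-k) • (D * (g * (h ^ (c + 1) * y))) by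
          rw [neg_smul], ← add_smul]
      congr 1
      push_cast
      ring

lemma Ctx.dOddTail (j p q : Bool) :
    d ((if j then f else 1) * ((if p then g else 1) * (if q then v else 1))) = 0 := by
  cases j <;> cases p <;> cases q <;>
    simp [hc.dfmul, hc.dgmul, hc.dvmul, hc.d1, hc.df, hc.dg, hc.dv]

lemma Ctx.gmul (i j q : Bool) (p : Bool) :
    g * ((if i then e else 1) * ((if j then f else 1) *
      ((if p then g else 1) * (if q then v else 1)))) =
    if p then 0 else (S i * S j) • ((if i then e else 1) * ((if j then f else 1) *
      (g * (if q then v else 1)))) := by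
  cases i <;> cases j <;> cases p <;> cases q <;>
    simp [hc.swap_ge, hc.swap_gf, hc.gg, hc.swap_ge', hc.swap_gf', hc.gg', S]

lemma Ctx.dmon (a b : ℕ) (i j p q : Bool) :
    d (mon D e f g v h a b i j p q) =
      (if p then 0 else (S i * S j * (-(b:ℚ) * k)) • mon D e f g v h (a+1) (b-1) i j true q)
      + (if i then mon D e f g v h (a+2) b false j p q else 0) := by
  have hR : d ((if i then e else 1) * ((if j then f else 1) *
      ((if p then g else 1) * (if q then v else 1)))) =
      if i then D * (D * ((if j then f else 1) *
        ((if p then g else 1) * (if q then v else 1)))) else 0 := by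
    cases i
    · simpa using hc.dOddTail j p q
    · simp only [if_pos]
      rw [hc.demul, hc.dOddTail]
      simp
  rw [mon, hc.dDpow, hc.dhpow, hR, mul_add]
  congr 1
  · rw [hc.cenhp (b-1) g, hc.gmul i j q p]
    cases p
    · simp only [if_neg Bool.false_ne_true, Bool.false_eq_true, if_false]
      simp only [mul_smul_comm, smul_smul]
      congr 1
      · ring
      · rw [mon, if_pos rfl, pow_succ, mul_assoc]
    · simp
  · cases i
    · simp
    · simp only [if_pos]
      rw [mon]
      simp only [Bool.false_eq_true, if_false, one_mul]
      rw [hc.cenD (h^b), hc.cenD (h^b), show a+2 = (a+1)+1 from rfl, pow_succ, pow_succ,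
        mul_assoc, mul_assoc]

lemma Ctx.cD' (x : A) : x * D = D * x := by
  have hcm := hc.free.central 0 x
  simp only [Matrix.cons_val_zero] at hcm
  exact hcm.eq.symm

lemma Ctx.ch' (x : A) : x * h = h * x := by
  have hcm := hc.free.central 1 x
  simp only [Matrix.cons_val_one, Matrix.head_cons] at hcm
  exact hcm.eq.symm

lemma Ctx.chp' (n : ℕ) (x : A) : x * h^n = h^n * x := by
  have hcm := (hc.free.central 1 x).pow_left n
  simp only [Matrix.cons_val_one, Matrix.head_cons] at hcm
  exact hcm.eq.symm

lemma Ctx.cDp' (n : ℕ) (x : A) : x * D^n = D^n * x := by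
  have hcm := (hc.free.central 0 x).pow_left n
  simp only [Matrix.cons_val_zero] at hcm
  exact hcm.eq.symm

end Ctx3


variable {A : Type*} [Ring A] [Algebra ℚ A]
variable {D e f g v h : A} {k : ℚ} {d : A →ₗ[ℚ] A}
section Ctx4
variable (hc : Ctx D e f g v h k d)
include hc

lemma Ctx.e_h (n : ℕ) (y : A) : e * (h^n * y) = h^n * (e*y) := hc.cenhp n e y
lemma Ctx.f_h (n : ℕ) (y : A) : f * (h^n * y) = h^n * (f*y) := hc.cenhp n f y
lemma Ctx.g_h (n : ℕ) (y : A) : g * (h^n * y) = h^n * (g*y) := hc.cenhp n g y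
lemma Ctx.v_h (n : ℕ) (y : A) : v * (h^n * y) = h^n * (v*y) := hc.cenhp n v y
lemma Ctx.e_h' (n : ℕ) : e * h^n = h^n * e := hc.chp' n e
lemma Ctx.f_h' (n : ℕ) : f * h^n = h^n * f := hc.chp' n f
lemma Ctx.g_h' (n : ℕ) : g * h^n = h^n * g := hc.chp' n g
lemma Ctx.v_h' (n : ℕ) : v * h^n = h^n * v := hc.chp' n v

lemma Ctx.cEltB_none (j q : Bool) :
    cEltB D e f g v h k ((j,q), none) = mon D e f g v h 0 0 false j false q := by
  cases j <;> cases q <;> simp [cEltB, mon]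

lemma Ctx.cEltB_D (j q : Bool) :
    cEltB D e f g v h k ((j,q), some (Sum.inl ())) = mon D e f g v h 1 0 false j false q := by
  cases j <;> cases q <;>
    simp [cEltB, mEltB, mon, mul_assoc, hc.cenD, hc.cD']

lemma Ctx.cEltB_gh (j q : Bool) (n : ℕ) :
    cEltB D e f g v h k ((j,q), some (Sum.inr (Sum.inl n))) =
      S q • mon D e f g v h 0 n false j true q := by
  cases j <;> cases q <;>
    simp [cEltB, mEltB, mon, mul_assoc, S,
      hc.e_h, hc.f_h, hc.g_h, hc.v_h, hc.e_h', hc.f_h', hc.g_h', hc.v_h',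
      hc.swap_vg, hc.swap_vg']

lemma Ctx.cEltB_s (j q : Bool) (m : ℕ) :
    cEltB D e f g v h k ((j,q), some (Sum.inr (Sum.inr m))) =
      mon D e f g v h 1 (m+1) false j false q
      + (((m:ℚ)+1) * k * S j) • mon D e f g v h 0 m true j true q := by
  cases j <;> cases q <;>
    simp [cEltB, mEltB, mon, mul_add, mul_smul_comm, smul_smul, mul_assoc, S,
      hc.cenD, hc.cD',
      hc.e_h, hc.f_h, hc.g_h, hc.v_h, hc.e_h', hc.f_h', hc.g_h', hc.v_h',
      hc.swap_vg, hc.swap_vg', hc.swap_ve, hc.swap_ve', hc.swap_vf, hc.swap_vf',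
      hc.swap_fe, hc.swap_fe', hc.swap_ge, hc.swap_ge', hc.swap_gf, hc.swap_gf',
      neg_smul, mul_neg, mul_one, neg_neg]

end Ctx4

def JL : Type := (Bool × Bool) × ((ℕ × ℕ) ⊕ (ℕ × ℕ))

abbrev J : Type := ((Bool × Bool) × Option idxM') ⊕ (JL ⊕ JL)

variable (D e f g v h k d) in
def Vf : J → A
  | .inl x => cEltB D e f g v h k x
  | .inr (.inl ⟨(j,q), .inl (a,b)⟩) => mon D e f g v h a b true j false q
  | .inr (.inl ⟨(j,q), .inr (a,c)⟩) => mon D e f g v h a (c+1) false j false q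
  | .inr (.inr ⟨(j,q), .inl (a,b)⟩) => d (mon D e f g v h a b true j false q)
  | .inr (.inr ⟨(j,q), .inr (a,c)⟩) => mon D e f g v h (a+1) c false j true q

def sigma' : J → I2
  | .inl ((j,q), none) => toI 0 0 false j false q
  | .inl ((j,q), some (.inl _)) => toI 1 0 false j false q
  | .inl ((j,q), some (.inr (.inl n))) => toI 0 n false j true q
  | .inl ((j,q), some (.inr (.inr m))) => toI 0 m true j true q
  | .inr (.inl ⟨(j,q), .inl (a,b)⟩) => toI a b true j false q
  | .inr (.inl ⟨(j,q), .inr (a,c)⟩) => toI a (c+1) false j false q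
  | .inr (.inr ⟨(j,q), .inl (a,0)⟩) => toI (a+2) 0 false j false q
  | .inr (.inr ⟨(j,q), .inl (a,b+1)⟩) => toI (a+1) b true j true q
  | .inr (.inr ⟨(j,q), .inr (a,c)⟩) => toI (a+1) c false j true q

variable (k) in
def sca : J → ℚ
  | .inl ((_,q), some (.inr (.inl _))) => S q
  | .inl ((j,_), some (.inr (.inr m))) => ((m:ℚ)+1) * k * S j
  | .inr (.inr ⟨(j,_), .inl (_,b+1)⟩) => ((b:ℚ)+1) * k * S j
  | _ => 1

def cor : J → ℚ
  | .inl (_, some (.inr (.inr _))) => 1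
  | .inr (.inr ⟨_, .inl (_,_+1)⟩) => 1
  | _ => 0

def rho : J → I2
  | .inl ((j,q), some (.inr (.inr m))) => toI 1 (m+1) false j false q
  | .inr (.inr ⟨(j,q), .inl (a,b+1)⟩) => toI (a+2) (b+1) false j false q
  | _ => toI 0 0 false false false false

def rc (a b : ℕ) (i j p q : Bool) : J :=
  match i, p with
  | false, false =>
    match b, a with
    | 0, 0 => .inl ((j,q), none)
    | 0, 1 => .inl ((j,q), some (.inl ()))
    | 0, (a'+2) => .inr (.inr ⟨(j,q), .inl (a', 0)⟩)
    | (b'+1), a => .inr (.inl ⟨(j,q), .inr (a, b')⟩)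
  | true, false => .inr (.inl ⟨(j,q), .inl (a, b)⟩)
  | false, true =>
    match a with
    | 0 => .inl ((j,q), some (.inr (.inl b)))
    | (a'+1) => .inr (.inr ⟨(j,q), .inr (a', b)⟩)
  | true, true =>
    match a with
    | 0 => .inl ((j,q), some (.inr (.inr b)))
    | (a'+1) => .inr (.inr ⟨(j,q), .inl (a', b+1)⟩)

def rI (t : I2) : J := rc (t.1 0) (t.1 1) (t.2 0) (t.2 1) (t.2 2) (t.2 3)

lemma rI_toI (a b : ℕ) (i j p q : Bool) : rI (toI a b i j p q) = rc a b i j p q := by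
  simp [rI, toI]

lemma r_sigma : ∀ x : J, rI (sigma' x) = x := by
  rintro (⟨⟨j,q⟩, (_|(⟨⟩|(n|m)))⟩ | (⟨⟨j,q⟩,(⟨a,b⟩|⟨a,c⟩)⟩ | ⟨⟨j,q⟩,(⟨a,(_|b)⟩|⟨a,c⟩)⟩)) <;>
    simp [sigma', rI_toI, rc]

lemma sigma_r : ∀ t : I2, sigma' (rI t) = t := by
  intro t
  rw [etaI t, rI_toI]
  generalize t.1 0 = a; generalize t.1 1 = b
  generalize t.2 0 = i; generalize t.2 1 = j; generalize t.2 2 = p; generalize t.2 3 = q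
  cases i <;> cases p
  · rcases b with _|b
    · rcases a with _|_|a <;> simp [rc, sigma']
    · simp [rc, sigma']
  · rcases a with _|a <;> simp [rc, sigma']
  · simp [rc, sigma']
  · rcases a with _|a <;> simp [rc, sigma']

lemma sigma'_inj : Function.Injective sigma' := by
  intro x y hxy
  rw [← r_sigma x, ← r_sigma y, hxy]

def eb (t : I2) : Bool := t.2 0

lemma eb_rho : ∀ x : J, eb (rho x) = false := by
  rintro (⟨⟨j,q⟩, (_|(⟨⟩|(n|m)))⟩ | (⟨⟨j,q⟩,(⟨a,b⟩|⟨a,c⟩)⟩ | ⟨⟨j,q⟩,(⟨a,(_|b)⟩|⟨a,c⟩)⟩)) <;>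
    simp [rho, eb, toI]

lemma cor_ne_imp : ∀ x : J, cor x ≠ 0 → eb (sigma' x) = true := by
  rintro (⟨⟨j,q⟩, (_|(⟨⟩|(n|m)))⟩ | (⟨⟨j,q⟩,(⟨a,b⟩|⟨a,c⟩)⟩ | ⟨⟨j,q⟩,(⟨a,(_|b)⟩|⟨a,c⟩)⟩)) <;>
    simp [cor, sigma', eb, toI]

lemma cor_rI_of_eb (t : I2) (hebt : eb t = false) : cor (rI t) = 0 := by
  rw [etaI t, rI_toI]
  have hi : t.2 0 = false := hebt
  rw [hi]
  generalize t.1 0 = a; generalize t.1 1 = b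
  generalize t.2 1 = j; generalize t.2 2 = p; generalize t.2 3 = q
  cases p
  · rcases b with _|b
    · rcases a with _|_|a <;> simp [rc, cor]
    · simp [rc, cor]
  · rcases a with _|a <;> simp [rc, cor]

lemma sca_ne (hk : k ≠ 0) : ∀ x : J, sca k x ≠ 0 := by
  rintro (⟨⟨j,q⟩, (_|(⟨⟩|(n|m)))⟩ | (⟨⟨j,q⟩,(⟨a,b⟩|⟨a,c⟩)⟩ | ⟨⟨j,q⟩,(⟨a,(_|b)⟩|⟨a,c⟩)⟩)) <;>
    simp only [sca] <;>
    first
    | exact one_ne_zero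
    | exact S_ne _
    | exact mul_ne_zero (mul_ne_zero (by positivity) hk) (S_ne _)

def ccL (k : ℚ) : JL → ℚ := fun x =>
  match x with
  | ⟨_, .inl _⟩ => 1
  | ⟨(j,_), .inr (_,c)⟩ => S false * S j * (-((c:ℚ)+1) * k)

lemma ccL_ne (hk : k ≠ 0) : ∀ x : JL, ccL k x ≠ 0 := by
  rintro ⟨⟨j,q⟩,(⟨a,b⟩|⟨a,c⟩)⟩
  · exact one_ne_zero
  · simp only [ccL]
    refine mul_ne_zero (mul_ne_zero (S_ne _) (S_ne _)) ?_
    refine mul_ne_zero ?_ hk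
    intro hcon
    have : ((c:ℚ)+1) = 0 := by linarith [neg_eq_zero.mp hcon]
    have : (0:ℚ) < (c:ℚ)+1 := by positivity
    linarith


section Ctx5
variable {D e f g v h : A} {k : ℚ} {d : A →ₗ[ℚ] A}
variable (hc : Ctx D e f g v h k d)
include hc

lemma Ctx.V_eq : ∀ x : J, Vf D e f g v h k d x =
    sca k x • gcMon ![D,h] ![e,f,g,v] (sigma' x) + cor x • gcMon ![D,h] ![e,f,g,v] (rho x) := by
  rintro (⟨⟨j,q⟩, (_|(⟨⟩|(n|m)))⟩ | (⟨⟨j,q⟩,(⟨a,b⟩|⟨a,c⟩)⟩ | ⟨⟨j,q⟩,(⟨a,(_|b)⟩|⟨a,c⟩)⟩))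
  · simp [Vf, sca, cor, sigma', gcMon_toI, hc.cEltB_none]
  · simp [Vf, sca, cor, sigma', gcMon_toI, hc.cEltB_D]
  · simp [Vf, sca, cor, sigma', gcMon_toI, hc.cEltB_gh]
  · rw [show Vf D e f g v h k d (.inl ((j,q), some (.inr (.inr m)))) =
        cEltB D e f g v h k ((j,q), some (.inr (.inr m))) from rfl, hc.cEltB_s]
    simp only [sca, cor, sigma', rho, gcMon_toI, one_smul]
    rw [add_comm]
  · simp [Vf, sca, cor, sigma', gcMon_toI]
  · simp [Vf, sca, cor, sigma', gcMon_toI]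
  · rw [show Vf D e f g v h k d (.inr (.inr ⟨(j,q), .inl (a,0)⟩)) =
        d (mon D e f g v h a 0 true j false q) from rfl, hc.dmon]
    simp [sca, cor, sigma', gcMon_toI]
  · rw [show Vf D e f g v h k d (.inr (.inr ⟨(j,q), .inl (a,b+1)⟩)) =
        d (mon D e f g v h a (b+1) true j false q) from rfl, hc.dmon]
    simp only [sca, cor, sigma', rho, gcMon_toI, one_smul, Bool.false_eq_true, if_false,
      if_true]
    congr 1
    congr 1
    simp only [S, if_true, if_false]
    push_cast
    ring
  · simp [Vf, sca, cor, sigma', gcMon_toI]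

lemma Ctx.d_cElt : ∀ x, d (cEltB D e f g v h k x) = 0 := by
  rintro ⟨⟨j,q⟩, (_|(⟨⟩|(n|m)))⟩
  · rw [hc.cEltB_none, hc.dmon]; simp
  · rw [hc.cEltB_D, hc.dmon]; simp
  · rw [hc.cEltB_gh, map_smul, hc.dmon]; simp
  · rw [hc.cEltB_s, map_add, map_smul, hc.dmon, hc.dmon]
    simp only [Bool.false_eq_true, if_false, if_true, add_zero, zero_add, smul_add, smul_smul]
    rw [show (1+1 : ℕ) = 2 by norm_num, show m+1-1 = m by norm_num, ← add_smul]
    convert zero_smul ℚ _ using 2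
    simp only [S, if_true, if_false]
    push_cast
    ring

lemma Ctx.dVW : ∀ x : JL, d (Vf D e f g v h k d (.inr (.inr x))) = 0 := by
  rintro ⟨⟨j,q⟩,(⟨a,b⟩|⟨a,c⟩)⟩
  · rw [show Vf D e f g v h k d (.inr (.inr ⟨(j,q), .inl (a,b)⟩)) =
        d (mon D e f g v h a b true j false q) from rfl, hc.dmon]
    simp only [Bool.false_eq_true, if_false, if_true]
    rw [map_add, map_smul, hc.dmon, hc.dmon]
    simp only [Bool.false_eq_true, if_false, if_true, add_zero, zero_add, smul_smul]
    rw [show a+1+2 = a+2+1 by norm_num, ← add_smul]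
    convert zero_smul ℚ _ using 2
    simp only [S, if_true, if_false]
    push_cast
    ring
  · rw [show Vf D e f g v h k d (.inr (.inr ⟨(j,q), .inr (a,c)⟩)) =
        mon D e f g v h (a+1) c false j true q from rfl, hc.dmon]
    simp

lemma Ctx.dVL : ∀ x : JL, d (Vf D e f g v h k d (.inr (.inl x))) =
    ccL k x • Vf D e f g v h k d (.inr (.inr x)) := by
  rintro ⟨⟨j,q⟩,(⟨a,b⟩|⟨a,c⟩)⟩
  · simp [ccL]; rfl
  · rw [show Vf D e f g v h k d (.inr (.inl ⟨(j,q), .inr (a,c)⟩)) =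
        mon D e f g v h a (c+1) false j false q from rfl, hc.dmon]
    simp only [Bool.false_eq_true, if_false, add_zero, ccL]
    rw [show Vf D e f g v h k d (.inr (.inr ⟨(j,q), .inr (a,c)⟩)) =
        mon D e f g v h (a+1) c false j true q from rfl]
    congr 2
    push_cast
    ring

end Ctx5

section Ctx6
variable {D e f g v h : A} {k : ℚ} {d : A →ₗ[ℚ] A}
variable (hc : Ctx D e f g v h k d)
include hc

lemma Ctx.V_li (hk : k ≠ 0) : LinearIndependent ℚ (Vf D e f g v h k d) := by
  let bB : Module.Basis I2 ℚ A := Module.Basis.mk hc.free.li (le_of_eq hc.free.spanning.symm)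
  have hBapp : ∀ t : I2, (gcMon ![D,h] ![e,f,g,v] t : A) = bB t :=
    fun t => (Module.Basis.mk_apply _ _ t).symm
  have hrepr : ∀ (x : J) (t : I2), (bB.repr (Vf D e f g v h k d x)) t =
      sca k x * (if sigma' x = t then 1 else 0) + cor x * (if rho x = t then 1 else 0) := by
    intro x t
    rw [hc.V_eq x, hBapp, hBapp, map_add, map_smul, map_smul, Module.Basis.repr_self,
      Module.Basis.repr_self]
    simp [Finsupp.single_apply]
  rw [linearIndependent_iff']
  intro s gc hsum
  have hcoord : ∀ t : I2, ∑ i ∈ s, gc i * ((bB.repr (Vf D e f g v h k d i)) t) = 0 := by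
    intro t
    have h0 := congrArg (fun z => (bB.repr z) t) hsum
    simpa [map_sum, Finsupp.finset_sum_apply, Finsupp.smul_apply, smul_eq_mul] using h0
  have stage1 : ∀ x ∈ s, cor x ≠ 0 → gc x = 0 := by
    intro x0 hx0 hcor
    have hne2 : rho x0 ≠ sigma' x0 := by
      intro hcon
      have h1 := eb_rho x0
      rw [hcon, cor_ne_imp x0 hcor] at h1
      simp at h1
    have h0 := hcoord (sigma' x0)
    have hsingle : ∑ i ∈ s, gc i * ((bB.repr (Vf D e f g v h k d i)) (sigma' x0)) =
        gc x0 * ((bB.repr (Vf D e f g v h k d x0)) (sigma' x0)) := by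
      apply Finset.sum_eq_single
      · intro x hx hne
        have hs : sigma' x ≠ sigma' x0 := fun hcon => hne (sigma'_inj hcon)
        have hr : rho x ≠ sigma' x0 := by
          intro hcon
          have h1 := eb_rho x
          rw [hcon, cor_ne_imp x0 hcor] at h1
          simp at h1
        rw [hrepr, if_neg hs, if_neg hr]
        ring
      · intro hxx; exact absurd hx0 hxx
    rw [hsingle, hrepr, if_pos rfl, if_neg hne2, mul_one, mul_zero, add_zero] at h0
    rcases mul_eq_zero.mp h0 with h1 | h1
    · exact h1
    · exact absurd h1 (sca_ne hk x0)
  intro x0 hx0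
  by_cases hcor : cor x0 = 0
  · have h0 := hcoord (sigma' x0)
    have hsingle : ∑ i ∈ s, gc i * ((bB.repr (Vf D e f g v h k d i)) (sigma' x0)) =
        gc x0 * ((bB.repr (Vf D e f g v h k d x0)) (sigma' x0)) := by
      apply Finset.sum_eq_single
      · intro x hx hne
        by_cases hcx : cor x = 0
        · rw [hrepr, if_neg (fun hcon => hne (sigma'_inj hcon)), hcx]
          ring
        · rw [stage1 x hx hcx, zero_mul]
      · intro hxx; exact absurd hx0 hxx
    rw [hsingle, hrepr, if_pos rfl, mul_one, hcor, zero_mul, add_zero] at h0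
    rcases mul_eq_zero.mp h0 with h1 | h1
    · exact h1
    · exact absurd h1 (sca_ne hk x0)
  · exact stage1 x0 hx0 hcor

lemma Ctx.V_span (hk : k ≠ 0) : ∀ t : I2, gcMon ![D,h] ![e,f,g,v] t ∈
    Submodule.span ℚ (Set.range (Vf D e f g v h k d)) := by
  have key : ∀ x : J, gcMon ![D,h] ![e,f,g,v] (sigma' x) =
      (sca k x)⁻¹ • (Vf D e f g v h k d x - cor x • gcMon ![D,h] ![e,f,g,v] (rho x)) := by
    intro x
    rw [eq_inv_smul_iff₀ (sca_ne hk x), hc.V_eq x, add_sub_cancel_right]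
  have hFF : ∀ t : I2, eb t = false → gcMon ![D,h] ![e,f,g,v] t ∈
      Submodule.span ℚ (Set.range (Vf D e f g v h k d)) := by
    intro t hebt
    have h1 := key (rI t)
    rw [sigma_r t] at h1
    rw [h1, cor_rI_of_eb t hebt, zero_smul, sub_zero]
    exact Submodule.smul_mem _ _ (Submodule.subset_span (Set.mem_range_self _))
  intro t
  by_cases hebt : eb t = false
  · exact hFF t hebt
  · have h1 := key (rI t)
    rw [sigma_r t] at h1
    rw [h1]
    exact Submodule.smul_mem _ _ (Submodule.sub_mem _
      (Submodule.subset_span (Set.mem_range_self _))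
      (Submodule.smul_mem _ _ (hFF _ (eb_rho _))))

lemma Ctx.V_spanTop (hk : k ≠ 0) :
    Submodule.span ℚ (Set.range (Vf D e f g v h k d)) = ⊤ := by
  rw [eq_top_iff, ← hc.free.spanning, Submodule.span_le]
  rintro y ⟨t, rfl⟩
  exact hc.V_span hk t

end Ctx6

section Ctx7
variable {D e f g v h : A} {k : ℚ} {d : A →ₗ[ℚ] A}
variable (hc : Ctx D e f g v h k d)
include hc

lemma Ctx.cElt_mem : ∀ i, cEltB D e f g v h k i ∈ gradeLB D e f g v h (degCB i) := by
  rintro ⟨⟨j,q⟩, (_|(⟨⟩|(n|m)))⟩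
  · rw [hc.cEltB_none]
    exact mon_mem (by cases j <;> cases q <;> simp [degCB])
  · rw [hc.cEltB_D]
    exact mon_mem (by cases j <;> cases q <;> simp [degCB, degMB] <;> omega)
  · rw [hc.cEltB_gh]
    exact Submodule.smul_mem _ _
      (mon_mem (by cases j <;> cases q <;> simp [degCB, degMB] <;> omega))
  · rw [hc.cEltB_s]
    exact Submodule.add_mem _
      (mon_mem (by cases j <;> cases q <;> simp [degCB, degMB] <;> omega))
      (Submodule.smul_mem _ _
        (mon_mem (by cases j <;> cases q <;> simp [degCB, degMB] <;> omega)))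

lemma Ctx.hpp (a b : ℕ) (y : A) : h^a * (h^b * y) = h^(a+b) * y := by
  rw [← mul_assoc, ← pow_add]
lemma Ctx.hpp' (a b : ℕ) : h^a * h^b = h^(a+b) := (pow_add h a b).symm

lemma Ctx.range_Dgh (hk : k ≠ 0) (N : ℕ) : D * (h^N * g) ∈ LinearMap.range d := by
  refine ⟨(-(((N:ℚ))+1) * k)⁻¹ • mon D e f g v h 0 (N+1) false false false false, ?_⟩
  rw [map_smul, hc.dmon]
  simp only [Bool.false_eq_true, if_false, add_zero, S, if_true, one_mul]
  rw [smul_smul]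
  rw [show ((-(((N:ℚ))+1) * k)⁻¹ * (-(((N+1:ℕ)):ℚ) * k)) = 1 by
    have hne : (-((N:ℚ)+1)) * k ≠ 0 :=
      mul_ne_zero (neg_ne_zero.mpr (by positivity)) hk
    push_cast
    exact inv_mul_cancel₀ hne]
  rw [one_smul, mon]
  simp [mul_assoc]

lemma Ctx.range_TD (N : ℕ) :
    D * (D * h^(N+1)) + (((N+1:ℕ):ℚ)*k) • (D * (h^N * (e * g))) ∈ LinearMap.range d := by
  refine ⟨mon D e f g v h 0 (N+1) true false false false, ?_⟩
  rw [hc.dmon]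
  simp only [Bool.false_eq_true, if_false, if_true, S, one_mul, mul_one, neg_mul, neg_neg,
    Nat.add_sub_cancel]
  rw [add_comm]
  congr 1
  · simp [mon, mul_assoc, pow_two]
  · congr 1
    simp [mon, mul_assoc]

lemma Ctx.mElt_prod (hk : k ≠ 0) : ∀ i j₂ : idxM',
    mEltB D e g h k i * mEltB D e g h k j₂ ∈ LinearMap.range d := by
  rintro (_|(n|m)) (_|(n'|m'))
  · exact ⟨e, hc.de⟩
  · have hEq : mEltB D e g h k (Sum.inl ()) * mEltB D e g h k (Sum.inr (Sum.inl n')) =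
        D * (h^n' * g) := by
      simp [mEltB, mul_assoc, hc.g_h']
    rw [hEq]; exact hc.range_Dgh hk n'
  · have hEq : mEltB D e g h k (Sum.inl ()) * mEltB D e g h k (Sum.inr (Sum.inr m')) =
        D * (D * h^(m'+1)) + (((m'+1:ℕ):ℚ)*k) • (D * (h^m' * (e * g))) := by
      simp only [mEltB, mul_add, mul_smul_comm]
      congr 1
      · rw [hc.cD' (h^(m'+1))]
      · congr 1
        · push_cast; ring
        · rw [hc.g_h', hc.e_h]
    rw [hEq]; exact hc.range_TD m'
  · have hEq : mEltB D e g h k (Sum.inr (Sum.inl n)) * mEltB D e g h k (Sum.inl ()) =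
        D * (h^n * g) := by
      simp [mEltB, mul_assoc, hc.g_h', hc.cD', hc.cenD]
    rw [hEq]; exact hc.range_Dgh hk n
  · have hEq : mEltB D e g h k (Sum.inr (Sum.inl n)) * mEltB D e g h k (Sum.inr (Sum.inl n')) =
        0 := by
      simp [mEltB, mul_assoc, hc.g_h, hc.g_h', hc.gg, hc.gg']
    rw [hEq]; exact Submodule.zero_mem _
  · have hEq : mEltB D e g h k (Sum.inr (Sum.inl n)) * mEltB D e g h k (Sum.inr (Sum.inr m')) =
        D * (h^(n+m'+1) * g) := by
      simp only [mEltB, mul_add, mul_smul_comm]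
      rw [show g * h ^ n * (h ^ (m'+1) * D) = D * (h^(n+m'+1) * g) by
        rw [mul_assoc, hc.hpp, hc.g_h, hc.cD' g, hc.cenD (h^(n+(m'+1))),
          show n+(m'+1) = n+m'+1 by omega]]
      rw [show g * h ^ n * (e * (g * h ^ m')) = 0 by
        rw [mul_assoc, hc.g_h n (e * (g * h^m')), hc.swap_ge, hc.gg]
        simp]
      simp
    rw [hEq]; exact hc.range_Dgh hk _
  · have hEq : mEltB D e g h k (Sum.inr (Sum.inr m)) * mEltB D e g h k (Sum.inl ()) =
        D * (D * h^(m+1)) + (((m+1:ℕ):ℚ)*k) • (D * (h^m * (e * g))) := by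
      simp only [mEltB, add_mul, smul_mul_assoc]
      congr 1
      · rw [mul_assoc, hc.cenD (h^(m+1)), hc.cD' (h^(m+1))]
      · congr 1
        · push_cast; ring
        · rw [mul_assoc, mul_assoc, hc.cD' (h^m), hc.cenD g, hc.cenD e, hc.g_h', hc.e_h]
    rw [hEq]; exact hc.range_TD m
  · have hEq : mEltB D e g h k (Sum.inr (Sum.inr m)) * mEltB D e g h k (Sum.inr (Sum.inl n')) =
        D * (h^(m+1+n') * g) := by
      simp only [mEltB, add_mul, smul_mul_assoc]
      rw [show h ^ (m+1) * D * (g * h ^ n') = D * (h^(m+1+n') * g) by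
        rw [mul_assoc, hc.cenD (h^(m+1)), hc.g_h', hc.hpp]]
      rw [show e * (g * h ^ m) * (g * h ^ n') = 0 by
        rw [mul_assoc, mul_assoc, hc.g_h m (g * h^n'), hc.gg]
        simp]
      simp
    rw [hEq]; exact hc.range_Dgh hk _
  · have hEq : mEltB D e g h k (Sum.inr (Sum.inr m)) * mEltB D e g h k (Sum.inr (Sum.inr m')) =
        D * (D * h^(m+m'+2)) + (((m+m'+2:ℕ):ℚ)*k) • (D * (h^(m+m'+1) * (e * g))) := by
      simp only [mEltB, add_mul, mul_add, smul_mul_assoc, mul_smul_comm, smul_smul]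
      rw [show h^(m+1) * D * (h^(m'+1) * D) = D * (D * h^(m+m'+2)) by
        rw [mul_assoc, hc.cD' (h^(m'+1)), hc.cenD (h^(m+1)), hc.cenD (h^(m+1)), hc.hpp',
          show (m+1)+(m'+1) = m+m'+2 by omega]]
      rw [show h^(m+1) * D * (e * (g * h^m')) = D * (h^(m+m'+1) * (e * g)) by
        rw [mul_assoc, hc.g_h', hc.e_h, hc.cenD (h^(m+1)), hc.hpp,
          show (m+1)+m' = m+m'+1 by omega]]
      rw [show e * (g * h^m) * (h^(m'+1) * D) = D * (h^(m+m'+1) * (e * g)) by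
        rw [mul_assoc, mul_assoc, hc.hpp, hc.cD' (h^(m+(m'+1))), hc.cenD g, hc.cenD e,
          hc.g_h', hc.e_h, show m+(m'+1) = m+m'+1 by omega]]
      rw [show e * (g * h^m) * (e * (g * h^m')) = 0 by
        simp [mul_assoc, hc.g_h, hc.e_h, hc.swap_ge, hc.gg]]
      simp only [smul_zero, add_zero, add_assoc]
      congr 1
      rw [← add_smul]
      congr 1
      push_cast
      ring
    rw [hEq]
    exact (by exact_mod_cast hc.range_TD (m+m'+1) : _)

end Ctx7

end St5

theorem statement5 {A : Type*} [Ring A] [Algebra ℚ A]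
    (D e f g v h : A) (k : ℚ) (hk : k ≠ 0) (d : A →ₗ[ℚ] A)
    (hfree : IsFreeGCA ![D, h] ![e, f, g, v])
    (hdeg : ∀ (m : ℕ) (x : A), x ∈ gradeLB D e f g v h m → d x ∈ gradeLB D e f g v h (m + 1))
    (hleib : ∀ (m : ℕ) (x y : A), x ∈ gradeLB D e f g v h m →
      d (x * y) = d x * y + ((-1 : ℚ) ^ m) • (x * d y))
    (hdD : d D = 0) (hdf : d f = 0) (hdg : d g = 0) (hdv : d v = 0)
    (hde : d e = D * D) (hdh : d h = (-k) • (D * g)) :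
    -- the listed elements are cocycles …
    (∀ i, d (cEltB D e f g v h k i) = 0) ∧
    -- … homogeneous of the indicated degrees,
    (∀ i, cEltB D e f g v h k i ∈ gradeLB D e f g v h (degCB i)) ∧
    -- their classes are linearly independent in the cohomology,
    LinearIndependent ℚ
      (fun i => (Submodule.Quotient.mk (cEltB D e f g v h k i) : A ⧸ LinearMap.range d)) ∧
    -- and they span the cohomology (so the classes of `D`, `f`, `g`, `v`, `g·hⁿ`, `s_n`
    -- generate `H(Λ_B, d₀)` as a ℚ-algebra);
    (LinearMap.ker d ≤
      Submodule.span ℚ (Set.range (cEltB D e f g v h k)) ⊔ LinearMap.range d) ∧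
    -- the relations `[D]² = 0` and `[D][g] = 0` hold in cohomology,
    D * D ∈ LinearMap.range d ∧
    D * g ∈ LinearMap.range d ∧
    -- and `ℚ ⊕ M′` is square-zero: the product of any two basis elements of `M′`
    -- is a coboundary.
    (∀ i j : idxM', mEltB D e g h k i * mEltB D e g h k j ∈ LinearMap.range d) := by
  have hc : St5.Ctx D e f g v h k d := ⟨hfree, hleib, hdD, hdf, hdg, hdv, hde, hdh⟩
  have hVli := hc.V_li hk
  have hspanTop := hc.V_spanTop hk
  set VW := fun x : St5.JL => St5.Vf D e f g v h k d (.inr (.inr x)) with hVWdef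
  have hrangeW : LinearMap.range d ≤ Submodule.span ℚ (Set.range VW) := by
    rw [LinearMap.range_eq_map, ← hspanTop, Submodule.map_span, Submodule.span_le]
    rintro y ⟨z, ⟨x, rfl⟩, rfl⟩
    rcases x with xc | xl | xw
    · rw [show St5.Vf D e f g v h k d (.inl xc) = cEltB D e f g v h k xc from rfl, hc.d_cElt]
      exact Submodule.zero_mem _
    · rw [hc.dVL xl]
      exact Submodule.smul_mem _ _ (Submodule.subset_span ⟨xl, rfl⟩)
    · rw [hc.dVW xw]
      exact Submodule.zero_mem _
  have hWleR : Submodule.span ℚ (Set.range VW) ≤ LinearMap.range d := by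
    rw [Submodule.span_le]
    rintro y ⟨x, rfl⟩
    rcases x with ⟨⟨j0,q0⟩, ⟨a0,b0⟩ | ⟨a0,c0⟩⟩
    · exact ⟨St5.mon D e f g v h a0 b0 true j0 false q0, rfl⟩
    · have hccne := St5.ccL_ne hk ⟨(j0,q0), Sum.inr (a0,c0)⟩
      refine ⟨(St5.ccL k ⟨(j0,q0), Sum.inr (a0,c0)⟩)⁻¹ •
        St5.Vf D e f g v h k d (.inr (.inl ⟨(j0,q0), Sum.inr (a0,c0)⟩)), ?_⟩
      rw [map_smul, show d (St5.Vf D e f g v h k d (.inr (.inl ⟨(j0,q0), Sum.inr (a0,c0)⟩))) =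
          St5.ccL k ⟨(j0,q0), Sum.inr (a0,c0)⟩ • VW ⟨(j0,q0), Sum.inr (a0,c0)⟩ from hc.dVL _,
        smul_smul, inv_mul_cancel₀ hccne, one_smul]
  have hCrange : (fun xc : (Bool × Bool) × Option idxM' =>
      St5.Vf D e f g v h k d (.inl xc)) = cEltB D e f g v h k := rfl
  have hdisj : Disjoint (Submodule.span ℚ (Set.range (cEltB D e f g v h k)))
      (LinearMap.range d) := by
    have h1 : Disjoint (Set.range (Sum.inl : ((Bool × Bool) × Option idxM') → St5.J))
        (Set.range (fun x : St5.JL => (Sum.inr (Sum.inr x) : St5.J))) := by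
      rw [Set.disjoint_left]
      rintro z ⟨x, rfl⟩ ⟨x', hx'⟩
      simp at hx'
    have h2 := hVli.disjoint_span_image h1
    rw [← Set.range_comp, ← Set.range_comp] at h2
    have h3 : (St5.Vf D e f g v h k d ∘ Sum.inl) = cEltB D e f g v h k := rfl
    have h4 : (St5.Vf D e f g v h k d ∘ fun x : St5.JL => (Sum.inr (Sum.inr x) : St5.J))
        = VW := rfl
    rw [h3, h4] at h2
    exact h2.mono_right hrangeW
  refine ⟨hc.d_cElt, hc.cElt_mem, ?_, ?_, ⟨e, hde⟩, ?_, hc.mElt_prod hk⟩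
  · -- linear independence in the quotient
    have hCli : LinearIndependent ℚ (cEltB D e f g v h k) := by
      have h2 := hVli.comp Sum.inl Sum.inl_injective
      exact h2
    have hmap := hCli.map (f := (LinearMap.range d).mkQ)
      (by rw [Submodule.ker_mkQ]; exact hdisj)
    exact hmap
  · -- spanning of the kernel
    intro x hx
    have hxtop : x ∈ Submodule.span ℚ (Set.range (St5.Vf D e f g v h k d)) := by
      rw [hspanTop]; trivial
    have hsplit : Set.range (St5.Vf D e f g v h k d) =
        Set.range (cEltB D e f g v h k) ∪
        (Set.range (fun xl : St5.JL => St5.Vf D e f g v h k d (.inr (.inl xl))) ∪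
          Set.range VW) := by
      ext y
      constructor
      · rintro ⟨(xc | xl | xw), rfl⟩
        · exact Or.inl ⟨xc, rfl⟩
        · exact Or.inr (Or.inl ⟨xl, rfl⟩)
        · exact Or.inr (Or.inr ⟨xw, rfl⟩)
      · rintro (⟨xc, rfl⟩ | (⟨xl, rfl⟩ | ⟨xw, rfl⟩))
        · exact ⟨.inl xc, rfl⟩
        · exact ⟨.inr (.inl xl), rfl⟩
        · exact ⟨.inr (.inr xw), rfl⟩
    rw [hsplit, Submodule.span_union, Submodule.span_union] at hxtop
    obtain ⟨y, hy, z, hz, rfl⟩ := Submodule.mem_sup.mp hxtop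
    obtain ⟨zl, hzl, zw, hzw, rfl⟩ := Submodule.mem_sup.mp hz
    have hyk : d y = 0 := by
      have hle : Submodule.span ℚ (Set.range (cEltB D e f g v h k)) ≤ LinearMap.ker d := by
        rw [Submodule.span_le]
        rintro w ⟨xc, rfl⟩
        exact LinearMap.mem_ker.mpr (hc.d_cElt xc)
      exact LinearMap.mem_ker.mp (hle hy)
    have hzwk : d zw = 0 := by
      have hle : Submodule.span ℚ (Set.range VW) ≤ LinearMap.ker d := by
        rw [Submodule.span_le]
        rintro w ⟨xw, rfl⟩
        exact LinearMap.mem_ker.mpr (hc.dVW xw)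
      exact LinearMap.mem_ker.mp (hle hzw)
    have hdzl : d zl = 0 := by
      have h0 := LinearMap.mem_ker.mp hx
      rw [map_add, map_add, hyk, hzwk, zero_add, add_zero] at h0
      exact h0
    have hzl0 : zl = 0 := by
      obtain ⟨l, hl⟩ := Finsupp.mem_span_range_iff_exists_finsupp.mp hzl
      have hWli : LinearIndependent ℚ VW := by
        have hinj : Function.Injective (fun x : St5.JL => (Sum.inr (Sum.inr x) : St5.J)) := by
          intro a b hab
          simpa using hab
        exact hVli.comp _ hinj
      have hds : d zl = ∑ i ∈ l.support, (l i * St5.ccL k i) • VW i := by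
        rw [← hl, map_finsuppSum]
        rw [Finsupp.sum]
        apply Finset.sum_congr rfl
        intro i _
        rw [map_smul, hc.dVL i, smul_smul]
      have h0 : ∑ i ∈ l.support, (l i * St5.ccL k i) • VW i = 0 := by
        rw [← hds, hdzl]
      have hall := linearIndependent_iff'.mp hWli l.support
        (fun i => l i * St5.ccL k i) h0
      have hl0 : l = 0 := by
        ext i
        by_cases hi : i ∈ l.support
        · have h1 := hall i hi
          rcases mul_eq_zero.mp h1 with h2 | h2
          · exact h2
          · exact absurd h2 (St5.ccL_ne hk i)
        · simpa using Finsupp.notMem_support_iff.mp hi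
      rw [← hl, hl0]
      simp [Finsupp.sum]
    rw [hzl0, zero_add]
    exact Submodule.mem_sup.mpr ⟨y, hy, zw, hWleR hzw, rfl⟩
  · -- D * g is a coboundary
    refine ⟨(-k)⁻¹ • h, ?_⟩
    rw [map_smul, hdh, smul_smul, inv_mul_cancel₀ (neg_ne_zero.mpr hk), one_smul]
end

section
/- The ℚ-algebra homomorphism ψ: ℚ[Z,R,S]/⟨Z(R−S)⟩ → B = ℚ[z,r,s]/⟨z(r−s)⟩ determined by ψ(Z) = z, ψ(R) = r², ψ(S) = s² is well defined (i.e. z(r²−s²) = 0 in B) and injective, and its image is exactly the ℚ-subalgebra of B generated by z, r² and s². Equivalently, the kernel of the ℚ-algebra homomorphism ℚ[Z,R,S] → B sending Z ↦ z, R ↦ r², S ↦ s² is the principal ideal ⟨Z(R−S)⟩. -/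
/-!
Statement 8: the ℚ-algebra homomorphism `ψ : ℚ[Z,R,S]/⟨Z(R−S)⟩ → B = ℚ[z,r,s]/⟨z(r−s)⟩`
with `ψ(Z) = z`, `ψ(R) = r²`, `ψ(S) = s²` is well defined (`z(r²−s²) = 0` in `B`) and
injective, with image the ℚ-subalgebra of `B` generated by `z, r², s²`.  Equivalently, the
kernel of the ℚ-algebra map `θ : ℚ[Z,R,S] → B`, `Z ↦ z, R ↦ r², S ↦ s²`, is the principal
ideal `⟨Z(R−S)⟩`.
-/

set_option synthInstance.maxHeartbeats 1000000
set_option maxHeartbeats 2000000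

noncomputable section

open MvPolynomial

/-- The polynomial ring ℚ[z,r,s] (also serving as ℚ[Z,R,S]). -/
abbrev P3 : Type := MvPolynomial (Fin 3) ℚ

/-- The ideal `⟨z(r−s)⟩`. -/
def relB : Ideal P3 := Ideal.span {(X 0 : P3) * (X 1 - X 2)}

/-- `B = ℚ[z,r,s]/⟨z(r−s)⟩`. -/
abbrev Bring : Type := P3 ⧸ relB

/-- The image of `z` in `B`. -/
def zB : Bring := Ideal.Quotient.mk relB (X 0)
/-- The image of `r` in `B`. -/
def rB : Bring := Ideal.Quotient.mk relB (X 1)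
/-- The image of `s` in `B`. -/
def sB : Bring := Ideal.Quotient.mk relB (X 2)

/-- The ℚ-algebra map `θ : ℚ[Z,R,S] → B`, `Z ↦ z`, `R ↦ r²`, `S ↦ s²`. -/
def θmap : P3 →ₐ[ℚ] Bring := aeval ![zB, rB ^ 2, sB ^ 2]

namespace Stmt8Aux

/-- substitution `Z ↦ z, R ↦ r², S ↦ s²` at the polynomial level -/
def σmap : P3 →ₐ[ℚ] P3 := aeval ![X 0, (X 1 : P3) ^ 2, (X 2 : P3) ^ 2]
/-- kill `X 0` -/
def νmap : P3 →ₐ[ℚ] P3 := aeval ![0, X 1, X 2]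
/-- kill `X 2` -/
def ν2map : P3 →ₐ[ℚ] P3 := aeval ![X 0, X 1, 0]
/-- `X 2 ↦ X 1` -/
def τmap : P3 →ₐ[ℚ] P3 := aeval ![X 0, X 1, X 1]
/-- the involution `X 2 ↦ X 1 - X 2` -/
def emap : P3 →ₐ[ℚ] P3 := aeval ![X 0, X 1, X 1 - X 2]

@[simp] lemma σ_X0 : σmap (X 0) = X 0 := by simp [σmap]
@[simp] lemma σ_X1 : σmap (X 1) = X 1 ^ 2 := by simp [σmap]
@[simp] lemma σ_X2 : σmap (X 2) = X 2 ^ 2 := by simp [σmap]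
@[simp] lemma ν_X0 : νmap (X 0) = 0 := by simp [νmap]
@[simp] lemma ν_X1 : νmap (X 1) = X 1 := by simp [νmap]
@[simp] lemma ν_X2 : νmap (X 2) = X 2 := by simp [νmap]
@[simp] lemma ν2_X0 : ν2map (X 0) = X 0 := by simp [ν2map]
@[simp] lemma ν2_X1 : ν2map (X 1) = X 1 := by simp [ν2map]
@[simp] lemma ν2_X2 : ν2map (X 2) = 0 := by simp [ν2map]
@[simp] lemma τ_X0 : τmap (X 0) = X 0 := by simp [τmap]
@[simp] lemma τ_X1 : τmap (X 1) = X 1 := by simp [τmap]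
@[simp] lemma τ_X2 : τmap (X 2) = X 1 := by simp [τmap]
@[simp] lemma e_X0 : emap (X 0) = X 0 := by simp [emap]
@[simp] lemma e_X1 : emap (X 1) = X 1 := by simp [emap]
@[simp] lemma e_X2 : emap (X 2) = X 1 - X 2 := by simp [emap]

lemma mon_eq (n : Fin 3 →₀ ℕ) (c : ℚ) :
    (monomial n c : P3) = C c * X 0 ^ n 0 * X 1 ^ n 1 * X 2 ^ n 2 := by
  rw [monomial_eq, Finsupp.prod_pow, Fin.prod_univ_three]; ring

lemma aeval_mon (f : Fin 3 → P3) (n : Fin 3 →₀ ℕ) (c : ℚ) :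
    aeval f (monomial n c) = C c * f 0 ^ n 0 * f 1 ^ n 1 * f 2 ^ n 2 := by
  rw [aeval_monomial, Finsupp.prod_pow, Fin.prod_univ_three, algebraMap_eq]; ring

/-- the exponent-doubling map on monomials corresponding to `σmap` -/
def dbl (m : Fin 3 →₀ ℕ) : Fin 3 →₀ ℕ :=
  Finsupp.single 0 (m 0) + Finsupp.single 1 (2 * m 1) + Finsupp.single 2 (2 * m 2)

@[simp] lemma dbl_0 (m : Fin 3 →₀ ℕ) : dbl m 0 = m 0 := by
  simp [dbl, Finsupp.single_apply]
@[simp] lemma dbl_1 (m : Fin 3 →₀ ℕ) : dbl m 1 = 2 * m 1 := by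
  simp [dbl, Finsupp.single_apply]
@[simp] lemma dbl_2 (m : Fin 3 →₀ ℕ) : dbl m 2 = 2 * m 2 := by
  simp [dbl, Finsupp.single_apply]

lemma dbl_inj : Function.Injective dbl := by
  intro m m' h
  ext i
  fin_cases i
  · show m 0 = m' 0
    have := congrArg (fun f => f 0) h; simpa using this
  · show m 1 = m' 1
    have := congrArg (fun f => f 1) h; simp at this; omega
  · show m 2 = m' 2
    have := congrArg (fun f => f 2) h; simp at this; omega

lemma σ_mon (n : Fin 3 →₀ ℕ) (c : ℚ) : σmap (monomial n c) = monomial (dbl n) c := by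
  rw [σmap, aeval_mon, mon_eq]
  simp only [Matrix.cons_val_zero, Matrix.cons_val_one, Matrix.head_cons, Matrix.cons_val_two,
    Matrix.tail_cons, dbl_0, dbl_1, dbl_2, ← pow_mul]

lemma coeff_σ (p : P3) : ∀ m, coeff (dbl m) (σmap p) = coeff m p := by
  induction p using MvPolynomial.induction_on' with
  | monomial n c =>
    intro m
    rw [σ_mon]
    simp [coeff_monomial, dbl_inj.eq_iff]
  | add p q hp hq =>
    intro m
    simp [map_add, coeff_add, hp m, hq m]

lemma σ_inj : Function.Injective σmap := by
  rw [injective_iff_map_eq_zero]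
  intro p hp
  ext m
  rw [← coeff_σ p m, hp]
  simp

lemma ν_fix (r : P3) (hr : ∀ m ∈ r.support, m 0 = 0) : νmap r = r := by
  conv_lhs => rw [← support_sum_monomial_coeff r]
  rw [map_sum]
  have : ∀ m ∈ r.support, νmap (monomial m (coeff m r)) = monomial m (coeff m r) := by
    intro m hm
    rw [νmap, aeval_mon, mon_eq, hr m hm]
    simp
  rw [Finset.sum_congr rfl this, support_sum_monomial_coeff]

lemma ν2_fix (r : P3) (hr : ∀ m ∈ r.support, m 2 = 0) : ν2map r = r := by
  conv_lhs => rw [← support_sum_monomial_coeff r]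
  rw [map_sum]
  have : ∀ m ∈ r.support, ν2map (monomial m (coeff m r)) = monomial m (coeff m r) := by
    intro m hm
    rw [ν2map, aeval_mon, mon_eq, hr m hm]
    simp
  rw [Finset.sum_congr rfl this, support_sum_monomial_coeff]

lemma mod_support (q : P3) (i : Fin 3) (m : Fin 3 →₀ ℕ)
    (hm : m ∈ (q.modMonomial (Finsupp.single i 1)).support) : m i = 0 := by
  by_contra h0
  rw [mem_support_iff] at hm
  exact hm (coeff_modMonomial_of_le q (by
    rw [Finsupp.single_le_iff]; omega))

lemma X0_dvd_of_ν (q : P3) (h : νmap q = 0) : (X 0 : P3) ∣ q := by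
  rw [X_dvd_iff_modMonomial_eq_zero]
  have hdec := modMonomial_add_divMonomial_single q 0
  have h2 : νmap (q.modMonomial (Finsupp.single 0 1)) = q.modMonomial (Finsupp.single 0 1) :=
    ν_fix _ (mod_support q 0)
  have := congrArg νmap hdec
  rw [map_add, map_mul, h, h2] at this
  simpa [νmap] using this

lemma X2_dvd_of_ν2 (q : P3) (h : ν2map q = 0) : (X 2 : P3) ∣ q := by
  rw [X_dvd_iff_modMonomial_eq_zero]
  have hdec := modMonomial_add_divMonomial_single q 2
  have h2 : ν2map (q.modMonomial (Finsupp.single 2 1)) = q.modMonomial (Finsupp.single 2 1) :=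
    ν2_fix _ (mod_support q 2)
  have := congrArg ν2map hdec
  rw [map_add, map_mul, h, h2] at this
  simpa [ν2map] using this

lemma ν2_comp_e : ν2map.comp emap = τmap := by
  apply MvPolynomial.algHom_ext
  intro i
  fin_cases i <;> simp [map_sub]

lemma e_e (c : P3) : emap (emap c) = c := by
  have h : emap.comp emap = AlgHom.id ℚ P3 := by
    apply MvPolynomial.algHom_ext
    intro i
    fin_cases i <;> simp [map_sub]
  calc emap (emap c) = (emap.comp emap) c := rfl
    _ = c := by rw [h]; rfl

lemma X12_dvd_iff (c : P3) : (X 1 - X 2 : P3) ∣ c ↔ τmap c = 0 := by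
  constructor
  · rintro ⟨h, rfl⟩
    rw [map_mul, map_sub]
    simp
  · intro h
    have h2 : ν2map (emap c) = 0 := by
      rw [← AlgHom.comp_apply, ν2_comp_e, h]
    obtain ⟨w, hw⟩ := X2_dvd_of_ν2 _ h2
    refine ⟨emap w, ?_⟩
    have := congrArg emap hw
    rw [e_e, map_mul] at this
    simpa using this

lemma key (a : P3) (h0 : (X 0 : P3) ∣ a) (h12 : τmap a = 0) :
    (X 0 * (X 1 - X 2) : P3) ∣ a := by
  obtain ⟨b, rfl⟩ := h0
  rw [map_mul, τ_X0] at h12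
  have hb : τmap b = 0 := by
    rcases mul_eq_zero.mp h12 with h | h
    · exact absurd h (X_ne_zero 0)
    · exact h
  obtain ⟨w, rfl⟩ := (X12_dvd_iff b).mpr hb
  exact ⟨w, by ring⟩

lemma νσ_comm : νmap.comp σmap = σmap.comp νmap := by
  apply MvPolynomial.algHom_ext
  intro i
  fin_cases i <;> simp [map_pow]

lemma τσ_comm : τmap.comp σmap = σmap.comp τmap := by
  apply MvPolynomial.algHom_ext
  intro i
  fin_cases i <;> simp [map_pow]

lemma θ_eq : (Ideal.Quotient.mkₐ ℚ relB).comp σmap = θmap := by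
  apply MvPolynomial.algHom_ext
  intro i
  fin_cases i <;>
    simp [θmap, zB, rB, sB, Ideal.Quotient.mkₐ_eq_mk, map_pow]

lemma wd : zB * (rB ^ 2 - sB ^ 2) = 0 := by
  rw [zB, rB, sB, ← map_pow, ← map_pow, ← map_sub, ← map_mul,
    Ideal.Quotient.eq_zero_iff_mem, relB, Ideal.mem_span_singleton]
  exact ⟨X 1 + X 2, by ring⟩

lemma ker_eq : RingHom.ker (θmap : P3 →+* Bring) = Ideal.span {(X 0 : P3) * (X 1 - X 2)} := by
  ext p
  rw [RingHom.mem_ker, Ideal.mem_span_singleton]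
  change θmap p = 0 ↔ _
  constructor
  · intro hp
    have hθ : θmap p = Ideal.Quotient.mk relB (σmap p) := by
      have := AlgHom.congr_fun θ_eq p
      rw [← this]
      simp [Ideal.Quotient.mkₐ_eq_mk]
    rw [hθ, Ideal.Quotient.eq_zero_iff_mem, relB, Ideal.mem_span_singleton] at hp
    have h0 : (X 0 : P3) ∣ σmap p := dvd_trans (dvd_mul_right _ _) hp
    have h12 : (X 1 - X 2 : P3) ∣ σmap p := dvd_trans (dvd_mul_left _ _) hp
    -- `ν (σ p) = 0`, hence `ν p = 0`, hence `X 0 ∣ p`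
    have hν : νmap (σmap p) = 0 := by
      obtain ⟨w, hw⟩ := h0
      rw [hw, map_mul, ν_X0, zero_mul]
    have hν' : σmap (νmap p) = 0 := by
      have := AlgHom.congr_fun νσ_comm p
      simp only [AlgHom.comp_apply] at this
      rw [← this, hν]
    have hνp : νmap p = 0 := σ_inj (by rw [hν', map_zero])
    -- `τ (σ p) = 0`, hence `τ p = 0`
    have hτ : τmap (σmap p) = 0 := (X12_dvd_iff _).mp h12
    have hτ' : σmap (τmap p) = 0 := by
      have := AlgHom.congr_fun τσ_comm p
      simp only [AlgHom.comp_apply] at this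
      rw [← this, hτ]
    have hτp : τmap p = 0 := σ_inj (by rw [hτ', map_zero])
    exact key p (X0_dvd_of_ν p hνp) hτp
  · rintro ⟨h, rfl⟩
    rw [map_mul, map_mul, map_sub]
    have : θmap (X 0) * (θmap (X 1) - θmap (X 2)) = zB * (rB ^ 2 - sB ^ 2) := by
      simp [θmap]
    rw [this, wd, zero_mul]

lemma range_vec (a b c : Bring) : Set.range ![a, b, c] = {a, b, c} := by
  ext x
  constructor
  · rintro ⟨i, rfl⟩
    fin_cases i
    · exact Set.mem_insert _ _
    · exact Set.mem_insert_of_mem _ (Set.mem_insert _ _)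
    · exact Set.mem_insert_of_mem _ (Set.mem_insert_of_mem _ rfl)
  · intro hx
    simp only [Set.mem_insert_iff, Set.mem_singleton_iff] at hx
    rcases hx with rfl | rfl | rfl
    exacts [⟨0, rfl⟩, ⟨1, rfl⟩, ⟨2, rfl⟩]

lemma range_eq : θmap.range = Algebra.adjoin ℚ {zB, rB ^ 2, sB ^ 2} := by
  rw [θmap, ← Algebra.adjoin_range_eq_range_aeval, range_vec]

end Stmt8Aux

theorem statement8 :
    -- well-definedness of `ψ`: `z(r² − s²) = 0` in `B`
    zB * (rB ^ 2 - sB ^ 2) = 0 ∧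
    -- the kernel of `θ` is exactly `⟨Z(R−S)⟩`
    RingHom.ker (θmap : P3 →+* Bring) = Ideal.span {(X 0 : P3) * (X 1 - X 2)} ∧
    -- the image of `θ` is the ℚ-subalgebra generated by `z`, `r²`, `s²`
    θmap.range = Algebra.adjoin ℚ {zB, rB ^ 2, sB ^ 2} ∧
    -- hence the induced map `ψ` on `ℚ[Z,R,S]/⟨Z(R−S)⟩` is injective with that image
    (∀ ψ : Bring →ₐ[ℚ] Bring, ψ.comp (Ideal.Quotient.mkₐ ℚ relB) = θmap →
      Function.Injective ψ ∧ ψ.range = Algebra.adjoin ℚ {zB, rB ^ 2, sB ^ 2}) := by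
  refine ⟨Stmt8Aux.wd, Stmt8Aux.ker_eq, Stmt8Aux.range_eq, ?_⟩
  intro ψ hψ
  have hcomp : ∀ p : P3, ψ (Ideal.Quotient.mk relB p) = θmap p := by
    intro p
    have := AlgHom.congr_fun hψ p
    simpa [Ideal.Quotient.mkₐ_eq_mk] using this
  constructor
  · intro a b hab
    obtain ⟨p, rfl⟩ := Ideal.Quotient.mk_surjective a
    obtain ⟨q, rfl⟩ := Ideal.Quotient.mk_surjective b
    rw [hcomp, hcomp] at hab
    have h0 : θmap (p - q) = 0 := by rw [map_sub, hab, sub_self]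
    have hm : p - q ∈ RingHom.ker (θmap : P3 →+* Bring) := h0
    rw [Stmt8Aux.ker_eq] at hm
    exact Ideal.Quotient.eq.mpr hm
  · have hrange : ψ.range = θmap.range := by
      ext x
      constructor
      · rintro ⟨y, rfl⟩
        obtain ⟨p, rfl⟩ := Ideal.Quotient.mk_surjective y
        exact ⟨p, (hcomp p).symm⟩
      · rintro ⟨p, rfl⟩
        exact ⟨Ideal.Quotient.mk relB p, hcomp p⟩
    rw [hrange, Stmt8Aux.range_eq]

end
end

section
/- Every d-cocycle of total degree 4 in L lies in external degree 0, i.e. in the subspace 1 ⊗ B₄. Precisely: the total-degree-4 component of L is spanned by 1 ⊗ B₄ together with the elements δ, αβ, αγ, and if c₁, c₂, c₃ ∈ ℚ and u ∈ B₄ are such that x = c₁·δ + c₂·α·β + c₃·α·γ + 1⊗u satisfies d(x) = 0, then c₁ = c₂ = c₃ = 0. -/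
/-!
Statement 9: in the Koszul complex `(L, d)`, `L = Λ(α,β,γ,δ) ⊗ B` with
`B = ℚ[z,r,s]/⟨z(r−s)⟩`, `d(α) = z`, `d(β) = r²`, `d(γ) = s²`, `d(δ) = α(r²−s²)`, every
`d`-cocycle of total degree 4 lies in external degree 0, i.e. in `1 ⊗ B₄`.  Precisely, the
total-degree-4 component of `L` is spanned by `1 ⊗ B₄` together with `δ, αβ, αγ`, and if
`d(c₁δ + c₂αβ + c₃αγ + 1⊗u) = 0` with `u ∈ B₄` then `c₁ = c₂ = c₃ = 0`.
-/

set_option synthInstance.maxHeartbeats 1000000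
set_option maxHeartbeats 2000000

noncomputable section

open MvPolynomial

/-- The degree-`m` (internal degree) component `B_m` of `B`, where `z, r, s` have
degree 2. -/
def Bgrade (m : ℕ) : Submodule ℚ Bring :=
  if 2 ∣ m then
    Submodule.map (Ideal.Quotient.mkₐ ℚ relB).toLinearMap
      (homogeneousSubmodule (Fin 3) ℚ (m / 2))
  else ⊥

/-- Index of the `B`-basis of `L = Λ(α,β,γ,δ) ⊗ B`: the monomials
`δⁿ·α^{ε₁}·β^{ε₂}·γ^{ε₃}`, encoded as `(n, ε₁, ε₂, ε₃)`. -/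
abbrev idxL : Type := ℕ × Bool × Bool × Bool

/-- `L = Λ(α,β,γ,δ) ⊗ B`, as the free `B`-module on the monomials
`δⁿ·α^{ε₁}·β^{ε₂}·γ^{ε₃}`. -/
abbrev Lmod : Type := idxL →₀ Bring

/-- Total degree of the basis monomial `(n, ε₁, ε₂, ε₃)` (external + internal degree):
`δ` has total degree 4, `α` total degree 1, and `β, γ` total degree 3. -/
def Ldeg : idxL → ℕ :=
  fun p => 4 * p.1 + (if p.2.1 then 1 else 0) + (if p.2.2.1 then 3 else 0) +
    (if p.2.2.2 then 3 else 0)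

/-- The part of the differential coming from `d(δⁿ) = n·δ^{n−1}·α·(r²−s²)`. -/
def dvalDelta : idxL → Lmod
  | (0, _, _, _) => 0
  | (_ + 1, true, _, _) => 0
  | (n + 1, false, e2, e3) =>
      Finsupp.single (n, true, e2, e3) (((n : ℚ) + 1) • (rB ^ 2 - sB ^ 2))

/-- The part of the differential coming from `d(α) = z`, `d(β) = r²`, `d(γ) = s²`, extended
to the exterior monomials by the graded Leibniz rule. -/
def dvalExt : idxL → Lmod
  | (_, false, false, false) => 0
  | (n, true, false, false) => Finsupp.single (n, false, false, false) zB
  | (n, false, true, false) => Finsupp.single (n, false, false, false) (rB ^ 2)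
  | (n, false, false, true) => Finsupp.single (n, false, false, false) (sB ^ 2)
  | (n, true, true, false) =>
      Finsupp.single (n, false, true, false) zB -
        Finsupp.single (n, true, false, false) (rB ^ 2)
  | (n, true, false, true) =>
      Finsupp.single (n, false, false, true) zB -
        Finsupp.single (n, true, false, false) (sB ^ 2)
  | (n, false, true, true) =>
      Finsupp.single (n, false, false, true) (rB ^ 2) -
        Finsupp.single (n, false, true, false) (sB ^ 2)
  | (n, true, true, true) =>
      Finsupp.single (n, false, true, true) zB -
        Finsupp.single (n, true, false, true) (rB ^ 2) +
        Finsupp.single (n, true, true, false) (sB ^ 2)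

/-- The value of the differential on the basis monomial `δⁿ·α^{ε₁}·β^{ε₂}·γ^{ε₃}`. -/
def dval : idxL → Lmod := fun p => dvalDelta p + dvalExt p

/-- The `B`-linear differential `d` of the Koszul complex `L`, determined by
`d(α) = z`, `d(β) = r²`, `d(γ) = s²`, `d(δ) = α·(r²−s²)` and the graded Leibniz rule. -/
def dL : Lmod →ₗ[Bring] Lmod := Finsupp.linearCombination Bring dval

/-- `d`, as a ℚ-linear map. -/
def dQ : Lmod →ₗ[ℚ] Lmod := dL.restrictScalars ℚ

/-- The total-degree-`m` component of `L`: the span of the elements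
`(basis monomial of total degree t) ⊗ (element of B_{m−t})`. -/
def LtotalGrade (m : ℕ) : Submodule ℚ Lmod :=
  Submodule.span ℚ
    {w : Lmod | ∃ i u, Ldeg i ≤ m ∧ u ∈ Bgrade (m - Ldeg i) ∧ w = Finsupp.single i u}

/-- The element `δ` of `L`. -/
def δL : Lmod := Finsupp.single (1, false, false, false) 1
/-- The element `α·β` of `L`. -/
def abL : Lmod := Finsupp.single (0, true, true, false) 1
/-- The element `α·γ` of `L`. -/
def agL : Lmod := Finsupp.single (0, true, false, true) 1
/-- The embedding `B → L`, `u ↦ 1 ⊗ u`. -/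
def embL : Bring →ₗ[ℚ] Lmod := Finsupp.lsingle (0, false, false, false)

/-- Elements of `relB` evaluate to 0 at points where `z(r−s) = 0`. -/
lemma eval_relB {p : P3} (hp : p ∈ relB) (v : Fin 3 → ℚ)
    (hv : v 0 * (v 1 - v 2) = 0) : eval v p = 0 := by
  rw [relB, Ideal.mem_span_singleton] at hp
  obtain ⟨q, rfl⟩ := hp
  simp only [map_mul, map_sub, eval_X, hv, zero_mul]

lemma mk_eq_zero_eval {p : P3} (h : Ideal.Quotient.mk relB p = 0) (v : Fin 3 → ℚ)
    (hv : v 0 * (v 1 - v 2) = 0) : eval v p = 0 :=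
  eval_relB (Ideal.Quotient.eq_zero_iff_mem.mp h) v hv

lemma smul_zB_eq_zero {c : ℚ} (h : c • zB = 0) : c = 0 := by
  have h' : Ideal.Quotient.mk relB (c • (X 0 : P3)) = 0 := by
    rw [← Ideal.Quotient.mkₐ_eq_mk ℚ, map_smul, Ideal.Quotient.mkₐ_eq_mk ℚ]
    exact h
  have := mk_eq_zero_eval h' ![1, 1, 1] (show (1 : ℚ) * (1 - 1) = 0 by norm_num)
  simpa [smul_eq_C_mul] using this

lemma smul_rs_eq_zero {c : ℚ} (h : c • (rB ^ 2 - sB ^ 2) = 0) : c = 0 := by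
  have h' : Ideal.Quotient.mk relB (c • ((X 1 : P3) ^ 2 - (X 2) ^ 2)) = 0 := by
    rw [← Ideal.Quotient.mkₐ_eq_mk ℚ, map_smul, map_sub, map_pow, map_pow,
      Ideal.Quotient.mkₐ_eq_mk ℚ]
    exact h
  have := mk_eq_zero_eval h' ![0, 1, 0] (by norm_num)
  simpa [smul_eq_C_mul] using this

lemma Bgrade_odd (m : ℕ) (h : ¬ 2 ∣ m) : Bgrade m = ⊥ := by
  rw [Bgrade, if_neg h]

lemma one_mem_Bgrade_zero : (1 : Bring) ∈ Bgrade 0 := by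
  rw [Bgrade, if_pos (dvd_zero 2)]
  exact ⟨1, by simpa only [SetLike.mem_coe, Nat.zero_div, mem_homogeneousSubmodule] using isHomogeneous_one (Fin 3) ℚ, map_one (Ideal.Quotient.mkₐ ℚ relB)⟩

lemma Bgrade_zero_eq {u : Bring} (hu : u ∈ Bgrade 0) : ∃ c : ℚ, u = c • 1 := by
  rw [Bgrade, if_pos (dvd_zero 2)] at hu
  obtain ⟨p, hp, rfl⟩ := hu
  have hp' : p.IsHomogeneous 0 := by simpa only [SetLike.mem_coe, Nat.zero_div, mem_homogeneousSubmodule] using hp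
  refine ⟨coeff 0 p, ?_⟩
  have hpC : p = C (coeff 0 p) := by
    ext d
    rcases eq_or_ne d 0 with rfl | hd
    · simp
    · rw [hp'.coeff_eq_zero (by simpa [Finsupp.degree_eq_zero_iff] using hd), coeff_C,
        if_neg fun h => hd h.symm]
  conv_lhs => rw [hpC]
  show Ideal.Quotient.mkₐ ℚ relB (C (coeff 0 p)) = _
  rw [show (C (coeff 0 p) : P3) = algebraMap ℚ P3 (coeff 0 p) from rfl,
    AlgHom.commutes, Algebra.algebraMap_eq_smul_one]

theorem statement9 :
    -- the total-degree-4 component of `L` is spanned by `1 ⊗ B₄` and `δ, αβ, αγ`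
    LtotalGrade 4 = Submodule.map embL (Bgrade 4) ⊔ Submodule.span ℚ {δL, abL, agL} ∧
    -- any cocycle of total degree 4 has vanishing components on `δ, αβ, αγ`
    (∀ (c₁ c₂ c₃ : ℚ) (u : Bring), u ∈ Bgrade 4 →
      dQ (c₁ • δL + c₂ • abL + c₃ • agL + embL u) = 0 →
      c₁ = 0 ∧ c₂ = 0 ∧ c₃ = 0) := by
  constructor
  · apply le_antisymm
    · rw [LtotalGrade]
      apply Submodule.span_le.mpr
      rintro w ⟨⟨n, b1, b2, b3⟩, u, hle, hu, rfl⟩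
      rcases b1 <;> rcases b2 <;> rcases b3 <;> simp only [Ldeg] at hle hu <;>
        simp only [Bool.false_eq_true, if_false, if_true, Nat.mul_zero, Nat.add_zero,
          Nat.zero_add] at hle hu
      -- (f,f,f): Ldeg = 4n
      · rcases (by omega : n = 0 ∨ n = 1 ∨ 4 * n > 4) with rfl | h
        · exact Submodule.mem_sup_left (Submodule.mem_map_of_mem (by simpa using hu))
        rcases h with rfl | h
        · obtain ⟨c, rfl⟩ := Bgrade_zero_eq (by simpa using hu)
          rw [show (Finsupp.single ((1 : ℕ), false, false, false) (c • (1 : Bring))) =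
            c • δL from (Finsupp.smul_single c _ 1).symm]
          exact Submodule.mem_sup_right (Submodule.smul_mem _ _
            (Submodule.subset_span (by simp)))
        · omega
      -- (f,f,t): Ldeg = 4n+3
      · have hn : n = 0 := by omega
        subst hn
        rw [show 4 - (4 * 0 + 3) = 1 by norm_num, Bgrade_odd 1 (by norm_num)] at hu
        simp only [Submodule.mem_bot] at hu
        subst hu
        simp only [Finsupp.single_zero]
        exact zero_mem _
      -- (f,t,f): Ldeg = 4n+3
      · have hn : n = 0 := by omega
        subst hn
        rw [show 4 - (4 * 0 + 3) = 1 by norm_num, Bgrade_odd 1 (by norm_num)] at hu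
        simp only [Submodule.mem_bot] at hu
        subst hu
        simp only [Finsupp.single_zero]
        exact zero_mem _
      -- (f,t,t): Ldeg = 4n+6 > 4
      · omega
      -- (t,f,f): Ldeg = 4n+1
      · have hn : n = 0 := by omega
        subst hn
        rw [show 4 - (4 * 0 + 1) = 3 by norm_num, Bgrade_odd 3 (by norm_num)] at hu
        simp only [Submodule.mem_bot] at hu
        subst hu
        simp only [Finsupp.single_zero]
        exact zero_mem _
      -- (t,f,t): Ldeg = 4n+4
      · have hn : n = 0 := by omega
        subst hn
        obtain ⟨c, rfl⟩ := Bgrade_zero_eq (by simpa using hu)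
        rw [show (Finsupp.single ((0 : ℕ), true, false, true) (c • (1 : Bring))) =
          c • agL from (Finsupp.smul_single c _ 1).symm]
        exact Submodule.mem_sup_right (Submodule.smul_mem _ _
          (Submodule.subset_span (by simp)))
      -- (t,t,f): Ldeg = 4n+4
      · have hn : n = 0 := by omega
        subst hn
        obtain ⟨c, rfl⟩ := Bgrade_zero_eq (by simpa using hu)
        rw [show (Finsupp.single ((0 : ℕ), true, true, false) (c • (1 : Bring))) =
          c • abL from (Finsupp.smul_single c _ 1).symm]
        exact Submodule.mem_sup_right (Submodule.smul_mem _ _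
          (Submodule.subset_span (by simp)))
      -- (t,t,t): Ldeg = 4n+7 > 4
      · omega
    · apply sup_le
      · rintro w ⟨u, hu, rfl⟩
        exact Submodule.subset_span ⟨(0, false, false, false), u, by simp [Ldeg],
          by simpa [Ldeg] using hu, rfl⟩
      · apply Submodule.span_le.mpr
        rintro w hw
        simp only [Set.mem_insert_iff, Set.mem_singleton_iff] at hw
        rcases hw with rfl | rfl | rfl
        · exact Submodule.subset_span ⟨(1, false, false, false), 1, by simp [Ldeg],
            by simpa [Ldeg] using one_mem_Bgrade_zero, rfl⟩
        · exact Submodule.subset_span ⟨(0, true, true, false), 1, by simp [Ldeg],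
            by simpa [Ldeg] using one_mem_Bgrade_zero, rfl⟩
        · exact Submodule.subset_span ⟨(0, true, false, true), 1, by simp [Ldeg],
            by simpa [Ldeg] using one_mem_Bgrade_zero, rfl⟩
  · intro c₁ c₂ c₃ u hu h
    have hexp : dQ (c₁ • δL + c₂ • abL + c₃ • agL + embL u) =
        c₁ • (Finsupp.single ((0 : ℕ), true, false, false) (rB ^ 2 - sB ^ 2)) +
        c₂ • (Finsupp.single ((0 : ℕ), false, true, false) zB -
          Finsupp.single ((0 : ℕ), true, false, false) (rB ^ 2)) +
        c₃ • (Finsupp.single ((0 : ℕ), false, false, true) zB -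
          Finsupp.single ((0 : ℕ), true, false, false) (sB ^ 2)) := by
      simp [dQ, dL, δL, abL, agL, embL, Finsupp.linearCombination_single, dval,
        dvalDelta, dvalExt]
    rw [hexp] at h
    have h2 : c₂ • zB = 0 := by
      have := DFunLike.congr_fun h ((0 : ℕ), false, true, false)
      simpa [Finsupp.single_apply] using this
    have h3 : c₃ • zB = 0 := by
      have := DFunLike.congr_fun h ((0 : ℕ), false, false, true)
      simpa [Finsupp.single_apply] using this
    have hc2 : c₂ = 0 := smul_zB_eq_zero h2
    have hc3 : c₃ = 0 := smul_zB_eq_zero h3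
    subst hc2
    subst hc3
    have h1 : c₁ • (rB ^ 2 - sB ^ 2) = 0 := by
      have := DFunLike.congr_fun h ((0 : ℕ), true, false, false)
      simpa [Finsupp.single_apply] using this
    exact ⟨smul_rs_eq_zero h1, rfl, rfl⟩

end
end

section
/- The cohomology of the complex (L, d) in total degree 4 (i.e. the space of d-cocycles of total degree 4 modulo d-coboundaries of total degree 4) is a one-dimensional ℚ-vector space, spanned by the class of the element 1 ⊗ rs. (In the paper this shows that H⁴(Im Emb_ω(c,μ); ℚ) is one-dimensional, which forces d(h) = k·b·g with k ≠ 0 in the minimal model.) -/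
/-!
Statement 10: the cohomology of the Koszul complex `(L, d)` in total degree 4 (the image of
the space of `d`-cocycles of total degree 4 in `L / im d`, i.e. cocycles modulo
coboundaries) is a one-dimensional ℚ-vector space, spanned by the class of `1 ⊗ rs`.
-/

set_option synthInstance.maxHeartbeats 1000000
set_option maxHeartbeats 2000000

noncomputable section

open MvPolynomial

namespace Stmt10

abbrev jB : idxL := (0, false, false, false)
abbrev ja : idxL := (0, true, false, false)
abbrev jb : idxL := (0, false, true, false)
abbrev jc : idxL := (0, false, false, true)
abbrev jab : idxL := (0, true, true, false)
abbrev jac : idxL := (0, true, false, true)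
abbrev jd : idxL := (1, false, false, false)

lemma coeff_relB_fst {x : P3} (hx : x ∈ relB) {m : Fin 3 →₀ ℕ} (hm : m 0 = 0) :
    coeff m x = 0 := by
  obtain ⟨f, hf⟩ := Ideal.mem_span_singleton.mp hx
  have hx' : x = X 0 * ((X 1 - X 2) * f) := by rw [hf]; ring
  rw [hx', coeff_X_mul']
  simp [Finsupp.mem_support_iff, hm]

lemma coeff_relB_snd {x : P3} (hx : x ∈ relB) {m : Fin 3 →₀ ℕ} (h1 : m 1 = 0)
    (h2 : m 2 = 0) : coeff m x = 0 := by
  obtain ⟨f, hf⟩ := Ideal.mem_span_singleton.mp hx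
  have hx' : x = (X 0 * f) * X 1 - (X 0 * f) * X 2 := by rw [hf]; ring
  rw [hx', coeff_sub, coeff_mul_X', coeff_mul_X']
  simp [Finsupp.mem_support_iff, h1, h2]

lemma zB_ne_zero : zB ≠ 0 := by
  intro h
  have hx : (X 0 : P3) ∈ relB := by rwa [zB, Ideal.Quotient.eq_zero_iff_mem] at h
  have h2 := coeff_relB_snd hx (m := Finsupp.single 0 1)
    (by simp [Finsupp.single_apply]) (by simp [Finsupp.single_apply])
  rw [coeff_X, if_pos rfl] at h2
  exact one_ne_zero h2

lemma rrss_ne_zero : rB ^ 2 - sB ^ 2 ≠ 0 := by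
  intro h
  have hx : (X 1 ^ 2 - X 2 ^ 2 : P3) ∈ relB := by
    rw [← Ideal.Quotient.eq_zero_iff_mem]
    rw [map_sub, map_pow, map_pow]
    exact h
  have h2 := coeff_relB_fst hx (m := Finsupp.single 1 2) (by simp [Finsupp.single_apply])
  rw [coeff_sub, X_pow_eq_monomial, X_pow_eq_monomial, coeff_monomial, coeff_monomial] at h2
  simp [Finsupp.single_eq_single_iff] at h2

lemma coeff_X1X2 : coeff (Finsupp.single 1 1 + Finsupp.single 2 1) ((X 1 : P3) * X 2) = 1 := by
  have e12 : (X 1 * X 2 : P3) = monomial (Finsupp.single 1 1 + Finsupp.single 2 1) 1 := by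
    rw [← pow_one (X 1 : P3), ← pow_one (X 2 : P3), X_pow_eq_monomial, X_pow_eq_monomial,
      monomial_mul, one_mul]
  rw [e12, coeff_monomial, if_pos rfl]

lemma rs_not_mem_P3 : (X 1 : P3) * X 2 ∉ Ideal.span {(X 0 : P3), X 1 ^ 2, X 2 ^ 2} := by
  intro h
  obtain ⟨a, q, hq, habc⟩ := Ideal.mem_span_insert.mp h
  obtain ⟨u, v, huv⟩ := Ideal.mem_span_pair.mp hq
  set m : Fin 3 →₀ ℕ := Finsupp.single 1 1 + Finsupp.single 2 1 with hm
  have hm0 : m 0 = 0 := by simp [hm, Finsupp.single_apply]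
  have hm1 : m 1 = 1 := by simp [hm, Finsupp.single_apply]
  have hm2 : m 2 = 1 := by simp [hm, Finsupp.single_apply]
  have h2 : coeff m (a * X 0) = 0 := by
    rw [coeff_mul_X']
    simp [Finsupp.mem_support_iff, hm0]
  have h3 : coeff m (u * X 1 ^ 2) = 0 := by
    rw [pow_two, ← mul_assoc, coeff_mul_X', if_pos (by simp [Finsupp.mem_support_iff, hm1])]
    rw [coeff_mul_X']
    simp [Finsupp.mem_support_iff, Finsupp.tsub_apply, hm1]
  have h4 : coeff m (v * X 2 ^ 2) = 0 := by
    rw [pow_two, ← mul_assoc, coeff_mul_X', if_pos (by simp [Finsupp.mem_support_iff, hm2])]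
    rw [coeff_mul_X']
    simp [Finsupp.mem_support_iff, Finsupp.tsub_apply, hm2]
  have := coeff_X1X2
  rw [habc, ← huv, coeff_add, coeff_add, h2, h3, h4] at this
  simp at this

lemma span_zrs : Ideal.span ({zB, rB ^ 2, sB ^ 2} : Set Bring) =
    Ideal.map (Ideal.Quotient.mk relB) (Ideal.span {(X 0 : P3), X 1 ^ 2, X 2 ^ 2}) := by
  rw [Ideal.map_span]
  congr 1
  rw [Set.image_insert_eq, Set.image_insert_eq, Set.image_singleton]
  simp [zB, rB, sB, map_pow]

lemma rs_not_mem_span : rB * sB ∉ Ideal.span ({zB, rB ^ 2, sB ^ 2} : Set Bring) := by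
  intro h
  rw [span_zrs] at h
  have h2 : Ideal.Quotient.mk relB (X 1 * X 2) ∈
      Ideal.map (Ideal.Quotient.mk relB) (Ideal.span {(X 0 : P3), X 1 ^ 2, X 2 ^ 2}) := by
    rw [map_mul]; exact h
  rw [Ideal.mem_quotient_iff_mem_sup] at h2
  have hle : relB ≤ Ideal.span {(X 0 : P3), X 1 ^ 2, X 2 ^ 2} := by
    rw [relB, Ideal.span_le]
    rintro y hy
    simp only [Set.mem_singleton_iff] at hy
    subst hy
    exact Ideal.mul_mem_right _ _ (Ideal.subset_span (by simp))
  rw [sup_eq_left.mpr hle] at h2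
  exact rs_not_mem_P3 h2

end Stmt10
namespace Stmt10

lemma degree_fin3 (d : Fin 3 →₀ ℕ) : Finsupp.degree d = d 0 + d 1 + d 2 := by
  rw [show Finsupp.degree d = ∑ i ∈ d.support, d i from rfl, Finset.sum_subset (Finset.subset_univ _)]
  · simp [Fin.sum_univ_three]
  · intro x _ hx
    simpa [Finsupp.mem_support_iff, not_not] using hx

lemma monomial_dvd {m : Fin 3 →₀ ℕ} {c : ℚ} {i : Fin 3} {k : ℕ} (hk : k ≤ m i) :
    (X i : P3) ^ k ∣ monomial m c := by
  refine ⟨monomial (m - Finsupp.single i k) c, ?_⟩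
  have hsum : Finsupp.single i k + (m - Finsupp.single i k) = m := by
    ext j
    by_cases hj : j = i
    · subst hj
      simp only [Finsupp.add_apply, Finsupp.single_apply, Finsupp.tsub_apply, if_true,
        eq_self_iff_true]
      omega
    · simp [Finsupp.single_apply, Finsupp.tsub_apply, Ne.symm hj]
  rw [X_pow_eq_monomial, monomial_mul, one_mul, hsum]

lemma quad_mem {p : P3} (hp : p.IsHomogeneous 2)
    (hc : coeff (Finsupp.single 1 1 + Finsupp.single 2 1) p = 0) :
    p ∈ Ideal.span {(X 0 : P3), X 1 ^ 2, X 2 ^ 2} := by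
  nth_rewrite 1 [p.as_sum]
  refine Submodule.sum_mem _ fun m hm => ?_
  have hdeg : Finsupp.degree m = 2 := by
    by_contra hne
    exact (Finsupp.mem_support_iff.mp hm) (hp.coeff_eq_zero hne)
  rw [degree_fin3] at hdeg
  by_cases h0 : 1 ≤ m 0
  · obtain ⟨y, hy⟩ := monomial_dvd (c := coeff m p) h0
    rw [pow_one] at hy
    rw [hy]
    exact Ideal.mul_mem_right _ _ (Ideal.subset_span (by simp))
  by_cases h1 : 2 ≤ m 1
  · obtain ⟨y, hy⟩ := monomial_dvd (c := coeff m p) h1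
    rw [hy]
    exact Ideal.mul_mem_right _ _ (Ideal.subset_span (by simp))
  by_cases h2 : 2 ≤ m 2
  · obtain ⟨y, hy⟩ := monomial_dvd (c := coeff m p) h2
    rw [hy]
    exact Ideal.mul_mem_right _ _ (Ideal.subset_span (by simp))
  · exfalso
    have hm1 : m 1 = 1 := by omega
    have hm2 : m 2 = 1 := by omega
    have hmeq : m = Finsupp.single 1 1 + Finsupp.single 2 1 := by
      ext j
      fin_cases j <;> simp [Finsupp.single_apply] <;> omega
    rw [hmeq] at hm
    exact Finsupp.mem_support_iff.mp hm hc

lemma Bgrade4_eq : Bgrade 4 = Submodule.map (Ideal.Quotient.mkₐ ℚ relB).toLinearMap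
    (homogeneousSubmodule (Fin 3) ℚ 2) := by
  rw [Bgrade, if_pos (by norm_num)]

lemma Bgrade0_eq : Bgrade 0 = Submodule.map (Ideal.Quotient.mkₐ ℚ relB).toLinearMap
    (homogeneousSubmodule (Fin 3) ℚ 0) := by
  rw [Bgrade, if_pos (by norm_num)]

lemma Bgrade1_eq : Bgrade 1 = ⊥ := by rw [Bgrade, if_neg (by norm_num)]
lemma Bgrade3_eq : Bgrade 3 = ⊥ := by rw [Bgrade, if_neg (by norm_num)]

lemma Bgrade0_mem {u : Bring} (hu : u ∈ Bgrade 0) : ∃ q : ℚ, u = algebraMap ℚ Bring q := by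
  rw [Bgrade0_eq] at hu
  obtain ⟨p, hp, rfl⟩ := hu
  replace hp : p.IsHomogeneous 0 := hp
  refine ⟨coeff 0 p, ?_⟩
  have hpC : p = C (coeff 0 p) := by
    ext d
    rw [coeff_C]
    split_ifs with hd
    · rw [← hd]
    · exact hp.coeff_eq_zero (by
        rw [Ne, Finsupp.degree_eq_zero_iff]
        exact fun h => hd (h ▸ rfl))
  conv_lhs => rw [hpC]
  simp [MvPolynomial.algebraMap_eq]

lemma rssq_mem_Bgrade4 : rB * sB ∈ Bgrade 4 := by
  rw [Bgrade4_eq]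
  refine ⟨X 1 * X 2, ?_, ?_⟩
  · exact (isHomogeneous_X _ 1).mul (isHomogeneous_X _ 2)
  · simp [rB, sB]

end Stmt10
namespace Stmt10

lemma dL_single (i : idxL) (u : Bring) : dL (Finsupp.single i u) = u • dval i :=
  Finsupp.linearCombination_single _ _ _

lemma dQ_apply (x : Lmod) : dQ x = dL x := rfl

lemma dval_jB : dval jB = 0 := by simp [dval, dvalDelta, dvalExt]
lemma dval_ja : dval ja = Finsupp.single jB zB := by simp [dval, dvalDelta, dvalExt]
lemma dval_jb : dval jb = Finsupp.single jB (rB ^ 2) := by simp [dval, dvalDelta, dvalExt]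
lemma dval_jc : dval jc = Finsupp.single jB (sB ^ 2) := by simp [dval, dvalDelta, dvalExt]
lemma dval_jab : dval jab = Finsupp.single jb zB - Finsupp.single ja (rB ^ 2) := by
  simp [dval, dvalDelta, dvalExt]
lemma dval_jac : dval jac = Finsupp.single jc zB - Finsupp.single ja (sB ^ 2) := by
  simp [dval, dvalDelta, dvalExt]
lemma dval_jd : dval jd = Finsupp.single ja (rB ^ 2 - sB ^ 2) := by
  show dvalDelta (0 + 1, false, false, false) + dvalExt (0 + 1, false, false, false) = _
  rw [dvalDelta, dvalExt]
  norm_num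

/-- Lemma C: `1 ⊗ v` is a coboundary for `v` in the ideal `(z, r², s²)`. -/
lemma single_mem_range {v : Bring} (hv : v ∈ Ideal.span ({zB, rB ^ 2, sB ^ 2} : Set Bring)) :
    Finsupp.single jB v ∈ LinearMap.range dQ := by
  refine Submodule.span_induction ?_ ?_ ?_ ?_ hv
  · rintro x hx
    simp only [Set.mem_insert_iff, Set.mem_singleton_iff] at hx
    rcases hx with rfl | rfl | rfl
    · exact ⟨Finsupp.single ja 1, by rw [dQ_apply, dL_single, dval_ja, one_smul]⟩
    · exact ⟨Finsupp.single jb 1, by rw [dQ_apply, dL_single, dval_jb, one_smul]⟩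
    · exact ⟨Finsupp.single jc 1, by rw [dQ_apply, dL_single, dval_jc, one_smul]⟩
  · exact ⟨0, by simp⟩
  · rintro x y - - ⟨w₁, hw₁⟩ ⟨w₂, hw₂⟩
    exact ⟨w₁ + w₂, by rw [map_add, hw₁, hw₂, Finsupp.single_add]⟩
  · rintro b x - ⟨w, hw⟩
    refine ⟨b • w, ?_⟩
    rw [dQ_apply] at hw ⊢
    rw [map_smul, hw, Finsupp.smul_single]

/-- Key lemma A: for `u ∈ B₄`, `1 ⊗ u` is an `rs`-multiple plus a coboundary. -/
lemma keyA {u : Bring} (hu : u ∈ Bgrade 4) :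
    Finsupp.single jB u ∈ Submodule.span ℚ {embL (rB * sB)} ⊔ LinearMap.range dQ := by
  rw [Bgrade4_eq] at hu
  obtain ⟨p, hp, rfl⟩ := hu
  replace hp : p.IsHomogeneous 2 := hp
  set c : ℚ := coeff (Finsupp.single 1 1 + Finsupp.single 2 1) p with hcdef
  have hq : p - C c * (X 1 * X 2) ∈ Ideal.span {(X 0 : P3), X 1 ^ 2, X 2 ^ 2} := by
    refine quad_mem (hp.sub ?_) ?_
    · exact ((isHomogeneous_C _ c).mul ((isHomogeneous_X _ 1).mul (isHomogeneous_X _ 2)))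
    · rw [coeff_sub, coeff_C_mul, coeff_X1X2, mul_one, hcdef, sub_self]
  have hmem : Ideal.Quotient.mk relB (p - C c * (X 1 * X 2)) ∈
      Ideal.span ({zB, rB ^ 2, sB ^ 2} : Set Bring) := by
    rw [span_zrs]
    exact Ideal.mem_map_of_mem _ hq
  have hC : Ideal.Quotient.mk relB (C c) = algebraMap ℚ Bring c := by
    rw [← MvPolynomial.algebraMap_eq]
    exact (Ideal.Quotient.mkₐ ℚ relB).commutes c
  have h1 : Ideal.Quotient.mk relB (p - C c * (X 1 * X 2)) =
      Ideal.Quotient.mk relB p - c • (rB * sB) := by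
    rw [map_sub, map_mul, map_mul, hC, ← Algebra.smul_def]
    rfl
  have hsplit : (Ideal.Quotient.mkₐ ℚ relB).toLinearMap p =
      c • (rB * sB) + Ideal.Quotient.mk relB (p - C c * (X 1 * X 2)) := by
    rw [h1]
    show Ideal.Quotient.mk relB p = _
    abel
  rw [hsplit, Finsupp.single_add]
  refine Submodule.add_mem_sup ?_ (single_mem_range hmem)
  rw [← Finsupp.smul_single]
  exact Submodule.smul_mem _ c (Submodule.subset_span rfl)

lemma dval_jB_mem (i : idxL) :
    dval i jB ∈ Ideal.span ({zB, rB ^ 2, sB ^ 2} : Set Bring) := by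
  obtain ⟨n, b1, b2, b3⟩ := i
  have hz : zB ∈ Ideal.span ({zB, rB ^ 2, sB ^ 2} : Set Bring) :=
    Ideal.subset_span (by simp)
  have hr : rB ^ 2 ∈ Ideal.span ({zB, rB ^ 2, sB ^ 2} : Set Bring) :=
    Ideal.subset_span (by simp)
  have hs : sB ^ 2 ∈ Ideal.span ({zB, rB ^ 2, sB ^ 2} : Set Bring) :=
    Ideal.subset_span (by simp)
  rcases n with _ | n <;> cases b1 <;> cases b2 <;> cases b3 <;>
    simp [dval, dvalDelta, dvalExt, Finsupp.single_apply, hz, hr, hs, Ideal.zero_mem]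

lemma rs_not_range : embL (rB * sB) ∉ LinearMap.range dQ := by
  rintro ⟨w, hw⟩
  have h := DFunLike.congr_fun hw jB
  have hR : (embL (rB * sB)) jB = rB * sB := by
    show (Finsupp.single jB (rB * sB)) jB = _
    exact Finsupp.single_eq_same
  have hL : (dQ w) jB = w.sum fun i b => b * dval i jB := by
    rw [dQ_apply, dL, Finsupp.linearCombination_apply, Finsupp.sum_apply]
    rfl
  rw [hL, hR] at h
  apply rs_not_mem_span
  rw [← h, Finsupp.sum]
  exact Submodule.sum_mem _ fun i _ => Ideal.mul_mem_left _ _ (dval_jB_mem i)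

end Stmt10
namespace Stmt10

def lap (i : idxL) : Lmod →ₗ[ℚ] Bring := Finsupp.lapply i

def TT : Lmod →ₗ[ℚ] Lmod :=
  (Finsupp.lsingle jB : Bring →ₗ[ℚ] Lmod).comp (lap jB) +
  (Finsupp.lsingle jab : Bring →ₗ[ℚ] Lmod).comp (lap jab) +
  (Finsupp.lsingle jac : Bring →ₗ[ℚ] Lmod).comp (lap jac) +
  (Finsupp.lsingle jd : Bring →ₗ[ℚ] Lmod).comp (lap jd)

def Gsub : Submodule ℚ Lmod :=
  LinearMap.ker (LinearMap.id - TT) ⊓ (Bgrade 4).comap (lap jB) ⊓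
    (Bgrade 0).comap (lap jab) ⊓ (Bgrade 0).comap (lap jac) ⊓ (Bgrade 0).comap (lap jd)

lemma TT_single (i : idxL) (u : Bring) (hi : i = jB ∨ i = jab ∨ i = jac ∨ i = jd) :
    TT (Finsupp.single i u) = Finsupp.single i u := by
  rcases hi with rfl | rfl | rfl | rfl <;>
    simp [TT, lap, Finsupp.single_apply]

lemma single_mem_Gsub {i : idxL} {u : Bring}
    (h : i = jB ∧ u ∈ Bgrade 4 ∨ i = jab ∧ u ∈ Bgrade 0 ∨
         i = jac ∧ u ∈ Bgrade 0 ∨ i = jd ∧ u ∈ Bgrade 0) :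
    Finsupp.single i u ∈ Gsub := by
  have hker : Finsupp.single i u ∈ LinearMap.ker (LinearMap.id - TT) := by
    rw [LinearMap.mem_ker, LinearMap.sub_apply, LinearMap.id_apply, sub_eq_zero]
    exact (TT_single i u (by tauto)).symm
  rcases h with ⟨rfl, hu⟩ | ⟨rfl, hu⟩ | ⟨rfl, hu⟩ | ⟨rfl, hu⟩ <;>
    exact ⟨⟨⟨⟨hker, by simp [Submodule.mem_comap, lap, Finsupp.single_apply, hu]⟩,
      by simp [Submodule.mem_comap, lap, Finsupp.single_apply, hu]⟩,
      by simp [Submodule.mem_comap, lap, Finsupp.single_apply, hu]⟩,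
      by simp [Submodule.mem_comap, lap, Finsupp.single_apply, hu]⟩

lemma grade4_le : LtotalGrade 4 ≤ Gsub := by
  rw [LtotalGrade, Submodule.span_le]
  rintro w ⟨i, u, hle, hu, rfl⟩
  obtain ⟨n, b1, b2, b3⟩ := i
  rcases n with _ | _ | n <;> cases b1 <;> cases b2 <;> cases b3
  -- n = 0
  · -- (0,f,f,f)
    norm_num [Ldeg] at hu
    exact single_mem_Gsub (Or.inl ⟨rfl, hu⟩)
  · -- (0,f,f,t) : Bgrade 1 = ⊥
    norm_num [Ldeg] at hu
    rw [Bgrade1_eq, Submodule.mem_bot] at hu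
    rw [hu, Finsupp.single_zero]
    exact Gsub.zero_mem
  · -- (0,f,t,f)
    norm_num [Ldeg] at hu
    rw [Bgrade1_eq, Submodule.mem_bot] at hu
    rw [hu, Finsupp.single_zero]
    exact Gsub.zero_mem
  · -- (0,f,t,t) : deg 6
    exact absurd hle (by norm_num [Ldeg])
  · -- (0,t,f,f) : Bgrade 3 = ⊥
    norm_num [Ldeg] at hu
    rw [Bgrade3_eq, Submodule.mem_bot] at hu
    rw [hu, Finsupp.single_zero]
    exact Gsub.zero_mem
  · -- (0,t,f,t)
    norm_num [Ldeg] at hu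
    exact single_mem_Gsub (Or.inr (Or.inr (Or.inl ⟨rfl, hu⟩)))
  · -- (0,t,t,f)
    norm_num [Ldeg] at hu
    exact single_mem_Gsub (Or.inr (Or.inl ⟨rfl, hu⟩))
  · -- (0,t,t,t) : deg 7
    exact absurd hle (by norm_num [Ldeg])
  -- n = 1
  · -- (1,f,f,f)
    norm_num [Ldeg] at hu
    exact single_mem_Gsub (Or.inr (Or.inr (Or.inr ⟨rfl, hu⟩)))
  · exact absurd hle (by norm_num [Ldeg])
  · exact absurd hle (by norm_num [Ldeg])
  · exact absurd hle (by norm_num [Ldeg])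
  · exact absurd hle (by norm_num [Ldeg])
  · exact absurd hle (by norm_num [Ldeg])
  · exact absurd hle (by norm_num [Ldeg])
  · exact absurd hle (by norm_num [Ldeg])
  -- n ≥ 2
  all_goals (exfalso; simp only [Ldeg] at hle; omega)

lemma main4 : LinearMap.ker dQ ⊓ LtotalGrade 4 ≤
    Submodule.span ℚ {embL (rB * sB)} ⊔ LinearMap.range dQ := by
  rintro x ⟨hker, hgr⟩
  obtain ⟨⟨⟨⟨hT, h0⟩, h1⟩, h2⟩, h3⟩ := grade4_le hgr
  replace hT : x = TT x := by
    have hT' : x ∈ LinearMap.ker (LinearMap.id (R := ℚ) (M := Lmod) - TT) := hT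
    rw [LinearMap.mem_ker, LinearMap.sub_apply, LinearMap.id_apply, sub_eq_zero] at hT'
    exact hT'
  replace hker : dQ x = 0 := hker
  replace h0 : x jB ∈ Bgrade 4 := h0
  obtain ⟨a, ha⟩ := Bgrade0_mem (show x jab ∈ Bgrade 0 from h1)
  obtain ⟨b, hb⟩ := Bgrade0_mem (show x jac ∈ Bgrade 0 from h2)
  obtain ⟨c, hc⟩ := Bgrade0_mem (show x jd ∈ Bgrade 0 from h3)
  have hxeq : x = Finsupp.single jB (x jB) + Finsupp.single jab (x jab) +
      Finsupp.single jac (x jac) + Finsupp.single jd (x jd) := by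
    conv_lhs => rw [hT]
    simp [TT, lap]
  have hdx : dQ x = (x jab) • dval jab + (x jac) • dval jac + (x jd) • dval jd := by
    conv_lhs => rw [hxeq]
    rw [dQ_apply, map_add, map_add, map_add, dL_single, dL_single, dL_single, dL_single,
      dval_jB, smul_zero, zero_add]
  have hker' : (x jab) • dval jab + (x jac) • dval jac + (x jd) • dval jd = 0 := by
    rw [← hdx]; exact hker
  have hA : a = 0 := by
    have h := DFunLike.congr_fun hker' jb
    rw [dval_jab, dval_jac, dval_jd] at h
    simp [Finsupp.single_apply] at h
    rw [ha, ← Algebra.smul_def] at h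
    rcases smul_eq_zero.mp h with h' | h'
    · exact h'
    · exact absurd h' zB_ne_zero
  have hB : b = 0 := by
    have h := DFunLike.congr_fun hker' jc
    rw [dval_jab, dval_jac, dval_jd] at h
    simp [Finsupp.single_apply] at h
    rw [hb, ← Algebra.smul_def] at h
    rcases smul_eq_zero.mp h with h' | h'
    · exact h'
    · exact absurd h' zB_ne_zero
  rw [hA, map_zero] at ha
  rw [hB, map_zero] at hb
  have hC : c = 0 := by
    have h := DFunLike.congr_fun hker' ja
    rw [dval_jab, dval_jac, dval_jd, ha, hb] at h
    simp [Finsupp.single_apply] at h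
    rw [hc, ← Algebra.smul_def] at h
    rcases smul_eq_zero.mp h with h' | h'
    · exact h'
    · exact absurd h' rrss_ne_zero
  rw [hC, map_zero] at hc
  rw [ha, hb, hc, Finsupp.single_zero, Finsupp.single_zero, Finsupp.single_zero,
    add_zero, add_zero, add_zero] at hxeq
  rw [hxeq]
  exact keyA h0

end Stmt10
theorem statement10 :
    -- `H⁴` (degree-4 cocycles modulo coboundaries) is one-dimensional …
    Module.finrank ℚ
      ↥(Submodule.map (Submodule.mkQ (LinearMap.range dQ))
        (LinearMap.ker dQ ⊓ LtotalGrade 4)) = 1 ∧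
    -- … spanned by the class of `1 ⊗ rs`, which is a nonzero class:
    embL (rB * sB) ∈ LinearMap.ker dQ ⊓ LtotalGrade 4 ∧
    embL (rB * sB) ∉ LinearMap.range dQ ∧
    LinearMap.ker dQ ⊓ LtotalGrade 4 ≤
      Submodule.span ℚ {embL (rB * sB)} ⊔ LinearMap.range dQ := by
  have hemb : embL (rB * sB) = Finsupp.single Stmt10.jB (rB * sB) := rfl
  have h2mem : embL (rB * sB) ∈ LinearMap.ker dQ ⊓ LtotalGrade 4 := by
    refine Submodule.mem_inf.mpr ⟨?_, ?_⟩
    · show dQ (embL (rB * sB)) = 0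
      rw [hemb, Stmt10.dQ_apply, Stmt10.dL_single, Stmt10.dval_jB, smul_zero]
    · refine Submodule.subset_span ⟨Stmt10.jB, rB * sB, ?_, ?_, hemb⟩
      · norm_num [Ldeg]
      · have : (4 : ℕ) - Ldeg Stmt10.jB = 4 := by norm_num [Ldeg]
        rw [this]
        exact Stmt10.rssq_mem_Bgrade4
  have h3 := Stmt10.rs_not_range
  have h4 := Stmt10.main4
  refine ⟨?_, h2mem, h3, h4⟩
  have hmap : Submodule.map (Submodule.mkQ (LinearMap.range dQ))
      (LinearMap.ker dQ ⊓ LtotalGrade 4)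
      = Submodule.span ℚ {Submodule.mkQ (LinearMap.range dQ) (embL (rB * sB))} := by
    apply le_antisymm
    · refine le_trans (Submodule.map_mono h4) ?_
      rw [Submodule.map_sup, Submodule.map_span, Set.image_singleton]
      have hbot : Submodule.map (Submodule.mkQ (LinearMap.range dQ)) (LinearMap.range dQ)
          = ⊥ := by
        rw [Submodule.eq_bot_iff]
        rintro y ⟨w, hw, rfl⟩
        rw [Submodule.mkQ_apply, Submodule.Quotient.mk_eq_zero]
        exact hw
      rw [hbot, sup_bot_eq]
    · rw [Submodule.span_le, Set.singleton_subset_iff]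
      exact ⟨embL (rB * sB), h2mem, rfl⟩
  rw [hmap]
  apply finrank_span_singleton
  intro hz
  apply h3
  rwa [Submodule.mkQ_apply, Submodule.Quotient.mk_eq_zero] at hz

end
end

section
/- The kernel of φ: P → H × H × K is a free group, freely generated by the set of commutators {[t, x] : t ∈ K∖{1}, x ∈ H∖{1}}, where [t,x] ∈ P denotes the commutator of the image in P of (1,t) ∈ H×K with the image in P of (1,x) ∈ H×H. In particular these commutators are pairwise distinct, each lies in ker φ, they generate ker φ, and the homomorphism from the free group on the set (K∖{1}) × (H∖{1}) to P sending the generator indexed by (t,x) to [t,x] is injective with image ker φ. -/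
/-!
Statement 12: with `P = (H×H) ∗_H (H×K)` and `φ : P → H×H×K` as in Statement 11, the
kernel of `φ` is a free group, freely generated by the commutators
`[t, x] = ⁅j₂(1,t), j₁(1,x)⁆` for `t ∈ K∖{1}`, `x ∈ H∖{1}`.  In particular these
commutators are pairwise distinct, each lies in `ker φ`, and the homomorphism from the
free group on `(K∖{1}) × (H∖{1})` sending the generator indexed by `(t,x)` to `[t,x]` is
injective with image `ker φ`.
-/

universe u

/-- The diagonal homomorphism `Δ : H → H × H`. -/
def diagHom (H : Type u) [Group H] : H →* H × H :=
  (MonoidHom.id H).prod (MonoidHom.id H)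

/-- `g₁ : H × H → H × (H × K)`, `(a, b) ↦ (a, b, 1)`. -/
def gOne (H K : Type u) [Group H] [Group K] : H × H →* H × (H × K) :=
  (MonoidHom.fst H H).prod ((MonoidHom.inl H K).comp (MonoidHom.snd H H))

/-- `g₂ : H × K → H × (H × K)`, `(c, t) ↦ (c, c, t)`. -/
def gTwo (H K : Type u) [Group H] [Group K] : H × K →* H × (H × K) :=
  (MonoidHom.fst H K).prod ((MonoidHom.fst H K).prod (MonoidHom.snd H K))

open scoped commutatorElement

namespace St12
variable {H K : Type u} [Group H] [Group K]

abbrev SGen (H K : Type u) [Group H] [Group K] := {t : K // t ≠ 1} × {x : H // x ≠ 1}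

abbrev FG (H K : Type u) [Group H] [Group K] := FreeGroup (SGen H K)

open Classical in
noncomputable def Egen (s : K) (y : H) : FG H K :=
  if h : s = 1 ∨ y = 1 then 1
  else FreeGroup.of (⟨s, fun hs => h (Or.inl hs)⟩, ⟨y, fun hy => h (Or.inr hy)⟩)

@[simp] lemma Egen_one_left (y : H) : Egen (1 : K) y = 1 := by simp [Egen]

@[simp] lemma Egen_one_right (s : K) : Egen s (1 : H) = 1 := by simp [Egen]

lemma Egen_of (s : K) (y : H) (hs : s ≠ 1) (hy : y ≠ 1) :
    Egen s y = FreeGroup.of (⟨s, hs⟩, ⟨y, hy⟩) := by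
  simp [Egen, hs, hy]

@[simp] lemma Egen_of' (p : SGen H K) : Egen p.1.1 p.2.1 = FreeGroup.of p := by
  rw [Egen_of _ _ p.1.2 p.2.2]

noncomputable def aH (y : H) : FG H K →* FG H K :=
  FreeGroup.lift fun p => (Egen p.1.1 y)⁻¹ * Egen p.1.1 (y * p.2.1)

lemma aH_Egen (y : H) (s : K) (z : H) :
    aH y (Egen s z) = (Egen s y)⁻¹ * Egen s (y * z) := by
  by_cases hs : s = 1
  · simp [hs]
  by_cases hz : z = 1
  · simp [hz]
  rw [Egen_of s z hs hz, aH, FreeGroup.lift_apply_of]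

@[simp] lemma aH_one (f : FG H K) : aH (1 : H) f = f := by
  have h : (aH (1 : H) : FG H K →* FG H K) = MonoidHom.id _ :=
    FreeGroup.ext_hom _ _ fun p => by
      rw [MonoidHom.id_apply, ← Egen_of' p, aH_Egen]
      simp
  rw [h]; rfl

lemma aH_mul (y₁ y₂ : H) (f : FG H K) : aH (y₁ * y₂) f = aH y₁ (aH y₂ f) := by
  have h : (aH (y₁ * y₂) : FG H K →* FG H K) = (aH y₁).comp (aH y₂) :=
    FreeGroup.ext_hom _ _ fun p => by
      rw [MonoidHom.comp_apply, ← Egen_of' p]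
      simp only [aH_Egen, map_mul, map_inv, mul_inv_rev, inv_inv, mul_assoc]
      group
  rw [h]; rfl

noncomputable def aK (u : K) : FG H K →* FG H K :=
  FreeGroup.lift fun p => Egen (u * p.1.1) p.2.1 * (Egen u p.2.1)⁻¹

lemma aK_Egen (u : K) (s : K) (z : H) :
    aK u (Egen s z) = Egen (u * s) z * (Egen u z)⁻¹ := by
  by_cases hz : z = 1
  · simp [hz]
  by_cases hs : s = 1
  · simp [hs]
  rw [Egen_of s z hs hz, aK, FreeGroup.lift_apply_of]

@[simp] lemma aK_one (f : FG H K) : aK (1 : K) f = f := by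
  have h : (aK (1 : K) : FG H K →* FG H K) = MonoidHom.id _ :=
    FreeGroup.ext_hom _ _ fun p => by
      rw [MonoidHom.id_apply, ← Egen_of' p, aK_Egen]
      simp
  rw [h]; rfl

lemma aK_mul (u₁ u₂ : K) (f : FG H K) : aK (u₁ * u₂) f = aK u₁ (aK u₂ f) := by
  have h : (aK (u₁ * u₂) : FG H K →* FG H K) = (aK u₁).comp (aK u₂) :=
    FreeGroup.ext_hom _ _ fun p => by
      rw [MonoidHom.comp_apply, ← Egen_of' p]
      simp only [aK_Egen, map_mul, map_inv, mul_inv_rev, inv_inv, mul_assoc]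
      group
  rw [h]; rfl

lemma keyF (t' : K) (z : H) (f : FG H K) (x : H) :
    aK t' (aH z (aK t'⁻¹ (aH z⁻¹ f) * Egen t'⁻¹ (z⁻¹ * x))) * Egen t' x
      = Egen t' z * f := by
  have phi : aK t' (aH z (aK t'⁻¹ (aH z⁻¹ f))) = Egen t' z * f * (Egen t' z)⁻¹ := by
    have h : ((aK t').comp ((aH z).comp ((aK t'⁻¹).comp (aH z⁻¹))) : FG H K →* FG H K)
        = (MulAut.conj (Egen t' z)).toMonoidHom := by
      refine FreeGroup.ext_hom _ _ fun p => ?_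
      simp only [MonoidHom.comp_apply, MulEquiv.coe_toMonoidHom, MulAut.conj_apply]
      rw [← Egen_of' p]
      simp only [aH_Egen, aK_Egen, map_mul, map_inv, mul_inv_rev, inv_inv,
        mul_inv_cancel_left, inv_mul_cancel_left, mul_inv_cancel, inv_mul_cancel,
        Egen_one_left, Egen_one_right, one_mul, mul_one]
      group
    calc aK t' (aH z (aK t'⁻¹ (aH z⁻¹ f)))
        = ((aK t').comp ((aH z).comp ((aK t'⁻¹).comp (aH z⁻¹)))) f := rfl
      _ = Egen t' z * f * (Egen t' z)⁻¹ := by rw [h]; rfl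
  rw [map_mul, map_mul, phi, aH_Egen, map_mul, map_inv, aK_Egen, aK_Egen]
  simp only [mul_inv_cancel, Egen_one_left, mul_inv_cancel_left, inv_mul_cancel_left,
    one_mul, mul_one, mul_inv_rev, inv_inv, mul_inv_cancel_left]
  group

/-- the model set: `(a, f, x, t)` represents `j₂(a,1) ρ(f) j₁(1,x) j₂(1,t)`. -/
abbrev XM (H K : Type u) [Group H] [Group K] := H × FG H K × H × K

noncomputable def f1 (g : H × H) (ξ : XM H K) : XM H K :=
  (g.1 * ξ.1, aH (ξ.1⁻¹ * g.1⁻¹ * g.2 * ξ.1) ξ.2.1,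
    (ξ.1⁻¹ * g.1⁻¹ * g.2 * ξ.1) * ξ.2.2.1, ξ.2.2.2)

noncomputable def f2 (g : H × K) (ξ : XM H K) : XM H K :=
  (g.1 * ξ.1, aK g.2 ξ.2.1 * Egen g.2 ξ.2.2.1, ξ.2.2.1, g.2 * ξ.2.2.2)

lemma f1_one (ξ : XM H K) : f1 (1 : H × H) ξ = ξ := by
  simp [f1]

lemma f1_mul (g h : H × H) (ξ : XM H K) : f1 (g * h) ξ = f1 g (f1 h ξ) := by
  obtain ⟨a, f, x, t⟩ := ξ
  simp only [f1, Prod.fst_mul, Prod.snd_mul, mul_inv_rev]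
  refine Prod.ext (by group) (Prod.ext ?_ (Prod.ext (by group) rfl))
  show aH _ f = aH _ (aH _ f)
  rw [← aH_mul]
  congr 1
  group

lemma f2_one (ξ : XM H K) : f2 (1 : H × K) ξ = ξ := by
  simp [f2]

lemma f2_mul (g h : H × K) (ξ : XM H K) : f2 (g * h) ξ = f2 g (f2 h ξ) := by
  obtain ⟨a, f, x, t⟩ := ξ
  simp only [f2, Prod.fst_mul, Prod.snd_mul]
  refine Prod.ext (by group) (Prod.ext ?_ (Prod.ext rfl (by group)))
  show aK _ f * Egen _ x = aK _ (aK _ f * Egen _ x) * Egen _ x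
  rw [aK_mul, map_mul, aK_Egen, mul_assoc, mul_assoc, inv_mul_cancel, mul_one]

noncomputable def B1 : (H × H) →* Equiv.Perm (XM H K) :=
  MonoidHom.mk' (fun g =>
    ⟨f1 g, f1 g⁻¹,
      fun ξ => by rw [← f1_mul, inv_mul_cancel, f1_one],
      fun ξ => by rw [← f1_mul, mul_inv_cancel, f1_one]⟩)
    (fun g h => Equiv.ext fun ξ => f1_mul g h ξ)

noncomputable def B2 : (H × K) →* Equiv.Perm (XM H K) :=
  MonoidHom.mk' (fun g =>
    ⟨f2 g, f2 g⁻¹,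
      fun ξ => by rw [← f2_mul, inv_mul_cancel, f2_one],
      fun ξ => by rw [← f2_mul, mul_inv_cancel, f2_one]⟩)
    (fun g h => Equiv.ext fun ξ => f2_mul g h ξ)

@[simp] lemma B1_apply (g : H × H) (ξ : XM H K) : B1 g ξ = f1 g ξ := rfl
@[simp] lemma B2_apply (g : H × K) (ξ : XM H K) : B2 g ξ = f2 g ξ := rfl

lemma Bcompat : (B1 : (H × H) →* Equiv.Perm (XM H K)).comp (diagHom H)
    = (B2 : (H × K) →* Equiv.Perm (XM H K)).comp (MonoidHom.inl H K) := by
  refine MonoidHom.ext fun a => Equiv.ext fun ξ => ?_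
  obtain ⟨b, f, x, t⟩ := ξ
  show f1 (diagHom H a) _ = f2 (a, 1) _
  simp [f1, f2, diagHom, mul_assoc]

/-- the commutator of the permutations acts on the `f`-coordinate by left
multiplication with the corresponding `Egen`. -/
lemma commAct (t' : K) (x' : H) (ξ : XM H K) :
    (⁅(B2 (1, t') : Equiv.Perm (XM H K)), B1 (1, x')⁆) ξ
      = (ξ.1, Egen t' (ξ.1⁻¹ * x' * ξ.1) * ξ.2.1, ξ.2.2.1, ξ.2.2.2) := by
  obtain ⟨a, f, x, t⟩ := ξ
  have hinv1 : ((B1 (1, x') : Equiv.Perm (XM H K)))⁻¹ = B1 (1, x'⁻¹) := by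
    rw [← map_inv]; norm_num
  have hinv2 : ((B2 (1, t') : Equiv.Perm (XM H K)))⁻¹ = B2 (1, t'⁻¹) := by
    rw [← map_inv]; norm_num
  rw [commutatorElement_def, hinv1, hinv2]
  simp only [Equiv.Perm.mul_apply, B1_apply, B2_apply]
  simp only [f1, f2, one_mul, mul_one, inv_one]
  set z : H := a⁻¹ * x' * a with hz
  have h1 : a⁻¹ * x'⁻¹ * a = z⁻¹ := by rw [hz]; group
  simp only [h1]
  refine Prod.ext rfl (Prod.ext ?_ (Prod.ext (by group) (by group)))
  show aK t' (aH (a⁻¹ * x' * a) (aK t'⁻¹ (aH z⁻¹ f) * Egen t'⁻¹ (z⁻¹ * x)))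
      * Egen t' (a⁻¹ * x' * a * (z⁻¹ * x)) = Egen t' z * f
  have h2 : a⁻¹ * x' * a * (z⁻¹ * x) = x := by rw [hz]; group
  rw [h2, ← hz]
  exact keyF t' z f x

section PSide
variable {P : Type u} [Group P] (j₁ : H × H →* P) (j₂ : H × K →* P)

noncomputable def rho0 : FG H K →* P :=
  FreeGroup.lift fun p => ⁅j₂ (1, p.1.1), j₁ (1, p.2.1)⁆

lemma rho0_of (p : SGen H K) :
    rho0 j₁ j₂ (FreeGroup.of p) = ⁅j₂ (1, p.1.1), j₁ (1, p.2.1)⁆ :=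
  FreeGroup.lift_apply_of

lemma rho0_Egen (s : K) (y : H) :
    rho0 j₁ j₂ (Egen s y) = ⁅j₂ (1, s), j₁ (1, y)⁆ := by
  by_cases hs : s = 1
  · subst hs
    have : j₂ ((1 : H), (1 : K)) = 1 := by rw [Prod.mk_one_one, map_one]
    simp [this, commutatorElement_def]
  by_cases hy : y = 1
  · subst hy
    have : j₁ ((1 : H), (1 : H)) = 1 := by rw [Prod.mk_one_one, map_one]
    simp [this, commutatorElement_def]
  rw [Egen_of s y hs hy, rho0_of]

lemma rho0_aH (y : H) (f : FG H K) :
    rho0 j₁ j₂ (aH y f) = j₁ (1, y) * rho0 j₁ j₂ f * (j₁ (1, y))⁻¹ := by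
  have h : (rho0 j₁ j₂).comp (aH y)
      = (MulAut.conj (j₁ (1, y))).toMonoidHom.comp (rho0 j₁ j₂) := by
    refine FreeGroup.ext_hom _ _ fun p => ?_
    rw [MonoidHom.comp_apply, MonoidHom.comp_apply, ← Egen_of' p, aH_Egen,
      map_mul, map_inv, rho0_Egen, rho0_Egen, rho0_Egen]
    simp only [MulEquiv.coe_toMonoidHom, MulAut.conj_apply, commutatorElement_def]
    have hm : j₁ ((1 : H), y * p.2.1) = j₁ (1, y) * j₁ (1, p.2.1) := by
      rw [← map_mul, Prod.mk_mul_mk, one_mul]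
    rw [hm]
    group
  calc rho0 j₁ j₂ (aH y f) = ((rho0 j₁ j₂).comp (aH y)) f := rfl
    _ = _ := by rw [h]; rfl

lemma rho0_aK (u : K) (f : FG H K) :
    rho0 j₁ j₂ (aK u f) = j₂ (1, u) * rho0 j₁ j₂ f * (j₂ (1, u))⁻¹ := by
  have h : (rho0 j₁ j₂).comp (aK u)
      = (MulAut.conj (j₂ (1, u))).toMonoidHom.comp (rho0 j₁ j₂) := by
    refine FreeGroup.ext_hom _ _ fun p => ?_
    rw [MonoidHom.comp_apply, MonoidHom.comp_apply, ← Egen_of' p, aK_Egen,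
      map_mul, map_inv, rho0_Egen, rho0_Egen, rho0_Egen]
    simp only [MulEquiv.coe_toMonoidHom, MulAut.conj_apply, commutatorElement_def]
    have hm : j₂ (1 * 1, u * p.1.1) = j₂ (1, u) * j₂ (1, p.1.1) := by
      rw [← map_mul, Prod.mk_mul_mk]
    rw [one_mul] at hm
    rw [hm]
    group
  calc rho0 j₁ j₂ (aK u f) = ((rho0 j₁ j₂).comp (aK u)) f := rfl
    _ = _ := by rw [h]; rfl

/-- realization of a model point as an element of `P`. -/
noncomputable def realn (ξ : XM H K) : P :=
  j₂ (ξ.1, 1) * rho0 j₁ j₂ ξ.2.1 * j₁ (1, ξ.2.2.1) * j₂ (1, ξ.2.2.2)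

variable (hcomm : j₁.comp (diagHom H) = j₂.comp (MonoidHom.inl H K))

include hcomm in
lemma rdiag (b : H) : j₂ (b, (1 : K)) = j₁ (b, b) :=
  (DFunLike.congr_fun hcomm b).symm

include hcomm in
lemma rec1 (g : H × H) (ξ : XM H K) :
    realn j₁ j₂ (f1 g ξ) = j₁ g * realn j₁ j₂ ξ := by
  obtain ⟨a, f, x, t⟩ := ξ
  show j₂ (g.1 * a, 1) * rho0 j₁ j₂ (aH (a⁻¹ * g.1⁻¹ * g.2 * a) f)
      * j₁ (1, (a⁻¹ * g.1⁻¹ * g.2 * a) * x) * j₂ (1, t)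
    = j₁ g * (j₂ (a, 1) * rho0 j₁ j₂ f * j₁ (1, x) * j₂ (1, t))
  set z : H := a⁻¹ * g.1⁻¹ * g.2 * a with hz
  have hsplit : j₁ ((1 : H), z * x) = j₁ (1, z) * j₁ (1, x) := by
    rw [← map_mul, Prod.mk_mul_mk, one_mul]
  have key : j₂ (g.1 * a, (1 : K)) * j₁ ((1 : H), z) = j₁ g * j₂ (a, (1 : K)) := by
    rw [rdiag j₁ j₂ hcomm, rdiag j₁ j₂ hcomm, ← map_mul, ← map_mul, Prod.mk_mul_mk,
      Prod.mk_mul_mk]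
    congr 1
    rw [hz]
    exact Prod.ext (by group) (by group)
  have key2 : ∀ X : P, j₂ (g.1 * a, (1 : K)) * (j₁ ((1 : H), z) * X)
      = j₁ g * (j₂ (a, (1 : K)) * X) := fun X => by
    rw [← mul_assoc, ← mul_assoc, key]
  rw [rho0_aH, hsplit]
  simp only [mul_assoc, inv_mul_cancel_left]
  rw [key2]

omit hcomm in
lemma rec2 (g : H × K) (ξ : XM H K) :
    realn j₁ j₂ (f2 g ξ) = j₂ g * realn j₁ j₂ ξ := by
  obtain ⟨a, f, x, t⟩ := ξ
  show j₂ (g.1 * a, 1) * rho0 j₁ j₂ (aK g.2 f * Egen g.2 x)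
      * j₁ (1, x) * j₂ (1, g.2 * t)
    = j₂ g * (j₂ (a, 1) * rho0 j₁ j₂ f * j₁ (1, x) * j₂ (1, t))
  have hsplit : j₂ ((1 : H), g.2 * t) = j₂ (1, g.2) * j₂ (1, t) := by
    rw [← map_mul, Prod.mk_mul_mk, one_mul]
  have key : j₂ (g.1 * a, (1 : K)) * j₂ ((1 : H), g.2) = j₂ g * j₂ (a, (1 : K)) := by
    rw [← map_mul, ← map_mul, Prod.mk_mul_mk, Prod.mk_mul_mk]
    congr 1
    exact Prod.ext (by group) (by group)
  have key2 : ∀ X : P, j₂ (g.1 * a, (1 : K)) * (j₂ ((1 : H), g.2) * X)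
      = j₂ g * (j₂ (a, (1 : K)) * X) := fun X => by
    rw [← mul_assoc, ← mul_assoc, key]
  rw [map_mul, rho0_aK, rho0_Egen, hsplit, commutatorElement_def]
  simp only [mul_assoc, inv_mul_cancel_left]
  rw [key2]

end PSide
end St12

open St12 in
theorem statement12 {H K P : Type u} [Group H] [Group K] [Group P]
    (j₁ : H × H →* P) (j₂ : H × K →* P)
    -- `P`, together with `j₁`, `j₂`, is the pushout of `Δ` and `i = inl`:
    (hcomm : j₁.comp (diagHom H) = j₂.comp (MonoidHom.inl H K))
    (huniv : ∀ (Q : Type u) [Group Q] (q₁ : H × H →* Q) (q₂ : H × K →* Q),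
      q₁.comp (diagHom H) = q₂.comp (MonoidHom.inl H K) →
      ∃! ψ : P →* Q, ψ.comp j₁ = q₁ ∧ ψ.comp j₂ = q₂)
    -- `φ` is the induced homomorphism to `H × H × K`:
    (φ : P →* H × (H × K))
    (hφ₁ : φ.comp j₁ = gOne H K) (hφ₂ : φ.comp j₂ = gTwo H K) :
    -- each commutator `[t,x]` lies in `ker φ`,
    (∀ (t : K) (x : H), ⁅j₂ (1, t), j₁ (1, x)⁆ ∈ MonoidHom.ker φ) ∧
    -- the commutators `[t,x]`, `t ≠ 1`, `x ≠ 1`, are pairwise distinct,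
    Function.Injective (fun p : {t : K // t ≠ 1} × {x : H // x ≠ 1} =>
      ⁅j₂ (1, p.1.1), j₁ (1, p.2.1)⁆) ∧
    -- and the homomorphism from the free group on `(K∖{1}) × (H∖{1})` sending the
    -- generator indexed by `(t,x)` to `[t,x]` is injective with image `ker φ`;
    -- in particular `ker φ` is free, freely generated by these commutators.
    (∀ ρ : FreeGroup ({t : K // t ≠ 1} × {x : H // x ≠ 1}) →* P,
      (∀ p : {t : K // t ≠ 1} × {x : H // x ≠ 1},
        ρ (FreeGroup.of p) = ⁅j₂ (1, p.1.1), j₁ (1, p.2.1)⁆) →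
      Function.Injective ρ ∧ MonoidHom.range ρ = MonoidHom.ker φ) := by
  classical
  -- Part 1: the commutators lie in the kernel of `φ`.
  have part1 : ∀ (t : K) (x : H), ⁅j₂ (1, t), j₁ (1, x)⁆ ∈ MonoidHom.ker φ := by
    intro t x
    have h1 : φ (j₁ ((1 : H), x)) = gOne H K (1, x) := DFunLike.congr_fun hφ₁ (1, x)
    have h2 : φ (j₂ ((1 : H), t)) = gTwo H K (1, t) := DFunLike.congr_fun hφ₂ (1, t)
    rw [MonoidHom.mem_ker, map_commutatorElement, h1, h2]
    show ⁅(((1 : H), ((1 : H), t)) : H × H × K), ((1 : H), (x, (1 : K)))⁆ = 1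
    rw [commutatorElement_def]
    refine Prod.ext ?_ (Prod.ext ?_ ?_) <;>
      simp only [Prod.fst_mul, Prod.snd_mul, Prod.fst_inv, Prod.snd_inv,
        Prod.fst_one, Prod.snd_one] <;> group
  -- `φ` kills the image of the free group.
  have hφρ : ∀ w, φ (rho0 j₁ j₂ w) = 1 := by
    have h : φ.comp (rho0 j₁ j₂) = 1 :=
      FreeGroup.ext_hom _ _ fun p => by
        rw [MonoidHom.comp_apply, rho0_of]
        exact MonoidHom.mem_ker.mp (part1 p.1.1 p.2.1)
    exact fun w => DFunLike.congr_fun h w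
  -- the universal permutation representation
  obtain ⟨ψ, ⟨hψ₁, hψ₂⟩, -⟩ := huniv (Equiv.Perm (XM H K)) B1 B2 Bcompat
  have hp1 : ∀ g, ψ (j₁ g) = B1 g := fun g => DFunLike.congr_fun hψ₁ g
  have hp2 : ∀ g, ψ (j₂ g) = B2 g := fun g => DFunLike.congr_fun hψ₂ g
  -- `P` is generated by the images of `j₁` and `j₂`.
  have genTop : Subgroup.closure (Set.range j₁ ∪ Set.range j₂) = ⊤ := by
    set S := Subgroup.closure (Set.range j₁ ∪ Set.range j₂) with hS
    have m1 : ∀ g, j₁ g ∈ S := fun g => Subgroup.subset_closure (Or.inl ⟨g, rfl⟩)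
    have m2 : ∀ g, j₂ g ∈ S := fun g => Subgroup.subset_closure (Or.inr ⟨g, rfl⟩)
    obtain ⟨ψS, ⟨hS1, hS2⟩, -⟩ := huniv S (j₁.codRestrict S m1) (j₂.codRestrict S m2)
      (MonoidHom.ext fun a => Subtype.ext (DFunLike.congr_fun hcomm a))
    obtain ⟨ψP, -, hu⟩ := huniv P j₁ j₂ hcomm
    have e1 : S.subtype.comp ψS = ψP := hu _
      ⟨by rw [MonoidHom.comp_assoc, hS1]; exact MonoidHom.ext fun x => rfl,
       by rw [MonoidHom.comp_assoc, hS2]; exact MonoidHom.ext fun x => rfl⟩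
    have e2 : MonoidHom.id P = ψP := hu _ ⟨MonoidHom.id_comp _, MonoidHom.id_comp _⟩
    rw [Subgroup.eq_top_iff']
    intro x
    have hx : S.subtype (ψS x) = x := DFunLike.congr_fun (e1.trans e2.symm) x
    exact hx ▸ (ψS x).2
  -- reconstruction of elements of `P` from the action
  have recon : ∀ p : P, ∀ ξ : XM H K, realn j₁ j₂ (ψ p ξ) = p * realn j₁ j₂ ξ := by
    intro p
    have hp : p ∈ Subgroup.closure (Set.range j₁ ∪ Set.range j₂) := by
      rw [genTop]; trivial
    refine Subgroup.closure_induction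
      (p := fun q _ => ∀ ξ : XM H K, realn j₁ j₂ (ψ q ξ) = q * realn j₁ j₂ ξ)
      ?_ ?_ ?_ ?_ hp
    · rintro q (⟨g, rfl⟩ | ⟨g, rfl⟩) ξ
      · rw [hp1 g]; exact rec1 j₁ j₂ hcomm g ξ
      · rw [hp2 g]; exact rec2 j₁ j₂ g ξ
    · intro ξ; rw [map_one]; simp
    · intro q r _ _ ihq ihr ξ
      rw [map_mul, Equiv.Perm.mul_apply, ihq, ihr, mul_assoc]
    · intro q _ ih ξ
      have h := ih (ψ q⁻¹ ξ)
      have hq : ψ q (ψ q⁻¹ ξ) = ξ := by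
        rw [← Equiv.Perm.mul_apply, ← map_mul, mul_inv_cancel, map_one]
        rfl
      rw [hq] at h
      exact eq_inv_mul_iff_mul_eq.mpr h.symm
  -- the action of the image of the free group on the slice `a = x = t = 1`
  have actW : ∀ (w : FreeGroup (SGen H K)) (f : FG H K) (x : H) (t : K),
      ψ (rho0 j₁ j₂ w) ((1 : H), f, x, t) = ((1 : H), w * f, x, t) := by
    intro w
    have hpure : ∀ q : SGen H K, (pure q : FreeGroup (SGen H K)) = FreeGroup.of q :=
      fun _ => rfl
    refine FreeGroup.induction_on w ?_ ?_ ?_ ?_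
    · intro f x t; rw [map_one, map_one]; simp
    · intro p f x t
      rw [rho0_of, map_commutatorElement, hp1, hp2, commAct]
      simp
    · intro p ih f x t
      rw [map_inv, map_inv]
      apply (ψ (rho0 j₁ j₂ (FreeGroup.of p))).injective
      rw [Equiv.Perm.coe_inv, Equiv.apply_symm_apply, ih, mul_inv_cancel_left]
    · intro w v ihw ihv f x t
      rw [map_mul, map_mul, Equiv.Perm.mul_apply, ihv, ihw, mul_assoc]
  -- the third bullet
  have third : ∀ ρ : FreeGroup (SGen H K) →* P,
      (∀ p : SGen H K, ρ (FreeGroup.of p) = ⁅j₂ (1, p.1.1), j₁ (1, p.2.1)⁆) →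
      Function.Injective ρ ∧ MonoidHom.range ρ = MonoidHom.ker φ := by
    intro ρ hρ
    have hρ0 : ρ = rho0 j₁ j₂ :=
      FreeGroup.ext_hom _ _ fun p => by rw [hρ p, rho0_of]
    subst hρ0
    constructor
    · intro w v h
      have h2 := congrArg
        (fun q : P => (ψ q ((1 : H), (1 : FG H K), (1 : H), (1 : K))).2.1) h
      simpa only [actW, mul_one] using h2
    · ext q
      constructor
      · rintro ⟨w, rfl⟩
        exact MonoidHom.mem_ker.mpr (hφρ w)
      · intro hq
        rcases hξ : ψ q ((1 : H), (1 : FG H K), (1 : H), (1 : K)) with ⟨a, f, x, t⟩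
        have hbase : realn j₁ j₂ ((1 : H), (1 : FG H K), (1 : H), (1 : K)) = 1 := by
          show j₂ (1, 1) * rho0 j₁ j₂ 1 * j₁ (1, 1) * j₂ (1, 1) = 1
          simp [Prod.mk_one_one]
        have hre := recon q ((1 : H), (1 : FG H K), (1 : H), (1 : K))
        rw [hξ, hbase, mul_one] at hre
        have hφq : φ q = 1 := MonoidHom.mem_ker.mp hq
        have hval : φ (realn j₁ j₂ (a, f, x, t)) = (a, (a * x, t)) := by
          show φ (j₂ (a, 1) * rho0 j₁ j₂ f * j₁ (1, x) * j₂ (1, t)) = _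
          have h1 : φ (j₂ (a, (1 : K))) = gTwo H K (a, 1) := DFunLike.congr_fun hφ₂ (a, 1)
          have h2 : φ (j₁ ((1 : H), x)) = gOne H K (1, x) := DFunLike.congr_fun hφ₁ (1, x)
          have h3 : φ (j₂ ((1 : H), t)) = gTwo H K (1, t) := DFunLike.congr_fun hφ₂ (1, t)
          rw [map_mul, map_mul, map_mul, hφρ, h1, h2, h3]
          show ((a, (a, (1 : K))) : H × H × K) * 1 * ((1, (x, 1)) : H × H × K)
              * ((1, (1, t)) : H × H × K) = (a, (a * x, t))
          refine Prod.ext ?_ (Prod.ext ?_ ?_) <;>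
            simp only [Prod.fst_mul, Prod.snd_mul, Prod.fst_inv, Prod.snd_inv,
              Prod.fst_one, Prod.snd_one] <;> group
        rw [← hre, hval] at hφq
        have ha : a = 1 := congrArg Prod.fst hφq
        have hax : a * x = 1 := congrArg (fun z : H × H × K => z.2.1) hφq
        have ht : t = 1 := congrArg (fun z : H × H × K => z.2.2) hφq
        have hx : x = 1 := by rwa [ha, one_mul] at hax
        refine MonoidHom.mem_range.mpr ⟨f, ?_⟩
        rw [← hre, ha, hx, ht]
        show rho0 j₁ j₂ f
            = j₂ (1, 1) * rho0 j₁ j₂ f * j₁ (1, 1) * j₂ (1, 1)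
        simp [Prod.mk_one_one]
  refine ⟨part1, ?_, third⟩
  -- the second bullet follows from the third applied to the canonical lift
  obtain ⟨hinj, -⟩ := third (rho0 j₁ j₂) (fun p => rho0_of j₁ j₂ p)
  intro p q h
  apply FreeGroup.of_injective
  apply hinj
  rw [rho0_of, rho0_of]
  exact h
end
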